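/- arXiv:1805.03772 — 5 statements merged into one kernel-verified Lean document; each statement's English description precedes it below -/
import Mathlib

section
/- With notation as above, the coefficient of q^{ℓ(a)} in the structure constant φ(a,a',b) is nonnegative for all a, a', b in W. -/
open Polynomial

private lemma hecke_aux
    {B W : Type} [Group W] [Finite W] {M : CoxeterMatrix B} (cs : CoxeterSystem M W)
    (H : Type) [Ring H] [Algebra (Polynomial ℚ) H]
    (T : Module.Basis W (Polynomial ℚ) H)
    (hone : T 1 = 1)
    (hmul : ∀ w w' : W, cs.length (w * w') = cs.length w + cs.length w' →
      T w * T w' = T (w * w'))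
    (hquad : ∀ i : B, (T (cs.simple i) + 1) * (T (cs.simple i) - algebraMap (Polynomial ℚ) H X) = 0)
    (n : ℕ) : ∀ a a' b : W, cs.length a = n →
      0 ≤ (T.repr (T a * T a') b).coeff n ∧
        ∀ m, n < m → (T.repr (T a * T a') b).coeff m = 0 := by
  have := Fintype.ofFinite W
  induction n with
  | zero =>
    intro a a' b ha
    have ha1 : a = 1 := cs.length_eq_zero_iff.mp ha
    subst ha1
    rw [hone, one_mul, Module.Basis.repr_self]
    rcases eq_or_ne a' b with h | h
    · subst h
      rw [Finsupp.single_eq_same]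
      exact ⟨by simp, fun m hm => by simp [coeff_one, hm.ne']⟩
    · constructor
      · simp [Finsupp.single_apply_eq_zero, h]
      · intro m hm
        simp [Finsupp.single_apply, h]
  | succ n IH =>
    classical
    intro a a' b ha
    have hane : a ≠ 1 := by
      intro h; rw [h, cs.length_one] at ha; omega
    obtain ⟨i, hi⟩ := cs.exists_leftDescent_of_ne_one hane
    obtain ⟨s, hs⟩ : ∃ s, s = cs.simple i := ⟨_, rfl⟩
    have hss : s * s = 1 := by rw [hs]; exact cs.simple_mul_simple_self i
    have hls : cs.length s = 1 := by rw [hs]; exact cs.length_simple i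
    have hsmul : ∀ w : W, cs.length (s * w) = cs.length w + 1 ∨
        cs.length (s * w) + 1 = cs.length w := by
      intro w; rw [hs]
      exact cs.length_simple_mul w i
    have hquad' : (T s + 1) * (T s - algebraMap (Polynomial ℚ) H X) = 0 := by
      rw [hs]; exact hquad i
    have hia : cs.length (s * a) < cs.length a := by rw [hs]; exact hi
    obtain ⟨c, hc⟩ : ∃ c, c = s * a := ⟨_, rfl⟩
    have hsc : s * c = a := by rw [hc, ← mul_assoc, hss, one_mul]
    have hlc : cs.length c = n := by
      rcases hsmul a with h | h <;> rw [hc] <;> omega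
    -- general multiplication rule for T s
    have hTs_sq : T s * T s = (X : Polynomial ℚ) • T s - T s + (X : Polynomial ℚ) • (1 : H) := by
      have h0 := hquad'
      have hcomm : T s * algebraMap (Polynomial ℚ) H X = (X : Polynomial ℚ) • T s := by
        rw [Algebra.smul_def (X : Polynomial ℚ) (T s)]
        exact (Algebra.commutes X (T s)).symm
      have hX1 : algebraMap (Polynomial ℚ) H X = (X : Polynomial ℚ) • (1 : H) := by
        rw [Algebra.smul_def (X : Polynomial ℚ) (1 : H), mul_one]
      rw [add_mul, one_mul, mul_sub] at h0
      rw [hcomm, hX1] at h0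
      have h1 := eq_neg_of_add_eq_zero_left h0
      have h2 := sub_eq_iff_eq_add.mp h1
      rw [h2]
      abel
    have hmul_rule : ∀ x : W, T s * T x =
        if cs.length (s * x) < cs.length x then
          (X : Polynomial ℚ) • T (s * x) + ((X : Polynomial ℚ) - 1) • T x
        else T (s * x) := by
      intro x
      by_cases hx : cs.length (s * x) < cs.length x
      · rw [if_pos hx]
        have hsy : s * (s * x) = x := by rw [← mul_assoc, hss, one_mul]
        have hly : cs.length (s * x) + 1 = cs.length x := by
          rcases hsmul x with h | h <;> omega
        have hTx : T s * T (s * x) = T x := by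
          rw [hmul s (s * x) (by rw [hsy, hls]; omega), hsy]
        have h2 : T s * T x = (T s * T s) * T (s * x) := by rw [mul_assoc, hTx]
        rw [h2, hTs_sq, add_mul, sub_mul, smul_mul_assoc, smul_mul_assoc, hTx, one_mul,
          sub_smul, one_smul]
        abel
      · rw [if_neg hx]
        have hly : cs.length (s * x) = cs.length x + 1 := by
          rcases hsmul x with h | h <;> omega
        exact hmul s x (by rw [hls]; omega)
    -- express the product via c
    have hprod : T a * T a' = T s * (T c * T a') := by
      rw [← mul_assoc, hmul s c (by rw [hsc, hls]; omega), hsc]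
    set g : W →₀ Polynomial ℚ := T.repr (T c * T a') with hg
    have hexp : T c * T a' = ∑ x : W, g x • T x := (T.sum_repr (T c * T a')).symm
    have hrepr : T.repr (T a * T a') b = ∑ x : W, g x * (T.repr (T s * T x) b) := by
      rw [hprod, hexp, Finset.mul_sum]
      have h3 : ∀ x : W, T s * (g x • T x) = g x • (T s * T x) := fun x => mul_smul_comm _ _ _
      simp_rw [h3, map_sum, map_smul, Finsupp.coe_finset_sum, Finset.sum_apply,
        Finsupp.smul_apply, smul_eq_mul]
    have hsb_ne : s * b ≠ b := by
      intro h
      have := hsmul b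
      rw [h] at this
      omega
    have hval : ∀ x : W, x ≠ s * b → x ≠ b → (T.repr (T s * T x) b) = 0 := by
      intro x h1 h2
      have hsxb : s * x ≠ b := by
        intro h; apply h1; rw [← h, ← mul_assoc, hss, one_mul]
      rw [hmul_rule x]
      by_cases hx : cs.length (s * x) < cs.length x
      · rw [if_pos hx]
        simp only [map_add, map_smul, Module.Basis.repr_self, Finsupp.coe_add,
          Finsupp.coe_smul, Pi.add_apply, Pi.smul_apply]
        rw [Finsupp.single_apply_eq_zero.mpr (fun h => absurd h.symm hsxb),
          Finsupp.single_apply_eq_zero.mpr (fun h => absurd h.symm h2)]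
        simp
      · rw [if_neg hx, Module.Basis.repr_self]
        exact Finsupp.single_apply_eq_zero.mpr (fun h => absurd h.symm hsxb)
    have hsum : T.repr (T a * T a') b =
        g (s * b) * (T.repr (T s * T (s * b)) b) + g b * (T.repr (T s * T b) b) := by
      rw [hrepr, ← Finset.sum_subset (Finset.subset_univ ({s * b, b} : Finset W))]
      · rw [Finset.sum_pair hsb_ne]
      · intro x _ hx
        simp only [Finset.mem_insert, Finset.mem_singleton, not_or] at hx
        rw [hval x hx.1 hx.2, mul_zero]
    have hssb : s * (s * b) = b := by rw [← mul_assoc, hss, one_mul]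
    -- IH applied
    obtain ⟨ih1, ih2⟩ := IH c a' b hlc
    obtain ⟨ih1', ih2'⟩ := IH c a' (s * b) hlc
    rw [← hg] at ih1 ih2 ih1' ih2'
    by_cases hb : cs.length (s * b) < cs.length b
    · -- T s * T (s*b) = T b ; T s * T b = X • T (s*b) + (X-1) • T b
      have h1 : (T.repr (T s * T (s * b)) b) = 1 := by
        rw [hmul_rule (s * b), if_neg (by rw [hssb]; omega), hssb,
          Module.Basis.repr_self, Finsupp.single_eq_same]
      have h2 : (T.repr (T s * T b) b) = X - 1 := by
        rw [hmul_rule b, if_pos hb]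
        simp only [map_add, map_smul, Module.Basis.repr_self, Finsupp.coe_add, Finsupp.coe_smul,
          Pi.add_apply, Pi.smul_apply]
        rw [Finsupp.single_apply_eq_zero.mpr (fun h => absurd h.symm hsb_ne),
          Finsupp.single_eq_same]
        simp
      rw [hsum, h1, h2, mul_one]
      constructor
      · rw [coeff_add, mul_sub, mul_one, coeff_sub, ih2' (n+1) (by omega)]
        have hXmul : (g b * X).coeff (n + 1) = (g b).coeff n := by
          rw [mul_comm, coeff_X_mul]
        rw [hXmul, ih2 (n+1) (by omega)]
        simpa using ih1
      · intro m hm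
        obtain ⟨k, rfl⟩ : ∃ k, m = k + 1 := ⟨m - 1, by omega⟩
        rw [coeff_add, mul_sub, mul_one, coeff_sub, ih2' (k+1) (by omega), mul_comm,
          coeff_X_mul, ih2 k (by omega), ih2 (k+1) (by omega)]
        ring
    · -- T s * T (s*b) = X • T b + (X-1) • T (s*b) ; T s * T b = T (s*b)
      have h1 : (T.repr (T s * T (s * b)) b) = X := by
        have hd : cs.length (s * (s * b)) < cs.length (s * b) := by
          rw [hssb]
          rcases hsmul b with h | h <;> omega
        rw [hmul_rule (s * b), if_pos hd, hssb]
        simp only [map_add, map_smul, Module.Basis.repr_self, Finsupp.coe_add, Finsupp.coe_smul,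
          Pi.add_apply, Pi.smul_apply]
        rw [Finsupp.single_eq_same,
          Finsupp.single_apply_eq_zero.mpr (fun h => absurd h.symm hsb_ne)]
        simp
      have h2 : (T.repr (T s * T b) b) = 0 := by
        rw [hmul_rule b, if_neg hb, Module.Basis.repr_self]
        exact Finsupp.single_apply_eq_zero.mpr (fun h => absurd h.symm hsb_ne)
      rw [hsum, h1, h2, mul_zero, add_zero]
      constructor
      · rw [mul_comm, coeff_X_mul]; exact ih1'
      · intro m hm
        obtain ⟨k, rfl⟩ : ∃ k, m = k + 1 := ⟨m - 1, by omega⟩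
        rw [mul_comm, coeff_X_mul, ih2' k (by omega)]

/-- the coefficient of `q^{ℓ(a)}` in the Hecke algebra structure constant
`φ(a,a',b)` is nonnegative. -/
theorem hecke_structure_constant_leading_coeff_nonneg
    {B W : Type} [Group W] [Finite W] {M : CoxeterMatrix B} (cs : CoxeterSystem M W)
    (H : Type) [Ring H] [Algebra (Polynomial ℚ) H]
    (T : Module.Basis W (Polynomial ℚ) H)
    (hone : T 1 = 1)
    (hmul : ∀ w w' : W, cs.length (w * w') = cs.length w + cs.length w' →
      T w * T w' = T (w * w'))
    (hquad : ∀ i : B, (T (cs.simple i) + 1) * (T (cs.simple i) - algebraMap (Polynomial ℚ) H X) = 0)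
    (a a' b : W) :
    0 ≤ (T.repr (T a * T a') b).coeff (cs.length a) :=
  (hecke_aux cs H T hone hmul hquad (cs.length a) a a' b rfl).1
end

section
/- With notation as above, if the coefficient of q^{ℓ(a)} in φ(a,a',b) is nonzero, then either (a'=b and every simple reflection occurring in a reduced expression of a lies in the left descent set of a') or ℓ(b) < ℓ(a'). -/
open Polynomial

/-- The support of `w`: the set of simple-reflection indices appearing in some
(equivalently, any) reduced word for `w`. -/
def CoxeterSystem.support {B W : Type} [Group W] {M : CoxeterMatrix B}
    (cs : CoxeterSystem M W) (w : W) : Set B :=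
  {i | ∃ l : List B, cs.IsReduced l ∧ cs.wordProd l = w ∧ i ∈ l}

section HeckeAux

variable {B W : Type} [Group W] {M : CoxeterMatrix B} (cs : CoxeterSystem M W)
  {H : Type} [Ring H] [Algebra (Polynomial ℚ) H] (T : Module.Basis W (Polynomial ℚ) H)

private lemma heckeTs2
    (hquad : ∀ i : B, (T (cs.simple i) + 1) * (T (cs.simple i) - algebraMap (Polynomial ℚ) H X) = 0)
    (i : B) :
    T (cs.simple i) * T (cs.simple i) = ((X : Polynomial ℚ) - 1) • T (cs.simple i) + (X : Polynomial ℚ) • (1 : H) := by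
  have h := hquad i
  set Ts := T (cs.simple i) with hTs
  have hA : (algebraMap (Polynomial ℚ) H) X = (X : Polynomial ℚ) • (1 : H) := Algebra.algebraMap_eq_smul_one X
  have hcomm : Ts * ((X : Polynomial ℚ) • (1 : H)) = (X : Polynomial ℚ) • Ts := by rw [mul_smul_comm, mul_one]
  have hexp : (Ts + 1) * (Ts - (X : Polynomial ℚ) • (1 : H)) = Ts * Ts - (X : Polynomial ℚ) • Ts + Ts - (X : Polynomial ℚ) • (1 : H) := by
    rw [add_mul, one_mul, mul_sub, hcomm]; abel
  rw [hA, hexp] at h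
  have h2 : Ts * Ts = (X : Polynomial ℚ) • Ts - Ts + (X : Polynomial ℚ) • (1 : H) := by
    apply eq_of_sub_eq_zero
    rw [← h]; abel
  rw [h2, sub_smul, one_smul]

private lemma heckeA_pos
    (hmul : ∀ w w' : W, cs.length (w * w') = cs.length w + cs.length w' →
      T w * T w' = T (w * w'))
    (hquad : ∀ i : B, (T (cs.simple i) + 1) * (T (cs.simple i) - algebraMap (Polynomial ℚ) H X) = 0)
    (i : B) (c : W) (hc : cs.IsLeftDescent c i) :
    T (cs.simple i) * T c = (X : Polynomial ℚ) • T (cs.simple i * c) + ((X : Polynomial ℚ) - 1) • T c := by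
  have hc' : cs.length (cs.simple i * c) + 1 = cs.length c := cs.isLeftDescent_iff.mp hc
  have h1 : T (cs.simple i) * T (cs.simple i * c) = T c := by
    have := hmul (cs.simple i) (cs.simple i * c)
      (by rw [cs.simple_mul_simple_cancel_left, cs.length_simple]; omega)
    rwa [cs.simple_mul_simple_cancel_left] at this
  calc T (cs.simple i) * T c
      = (T (cs.simple i) * T (cs.simple i)) * T (cs.simple i * c) := by rw [mul_assoc, h1]
    _ = (((X : Polynomial ℚ) - 1) • T (cs.simple i) + (X : Polynomial ℚ) • (1 : H)) * T (cs.simple i * c) := by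
        rw [heckeTs2 cs T hquad i]
    _ = ((X : Polynomial ℚ) - 1) • (T (cs.simple i) * T (cs.simple i * c)) + (X : Polynomial ℚ) • T (cs.simple i * c) := by
        rw [add_mul, smul_mul_assoc, smul_mul_assoc, one_mul]
    _ = (X : Polynomial ℚ) • T (cs.simple i * c) + ((X : Polynomial ℚ) - 1) • T c := by rw [h1, add_comm]

private lemma heckeA_neg
    (hmul : ∀ w w' : W, cs.length (w * w') = cs.length w + cs.length w' →
      T w * T w' = T (w * w'))
    (i : B) (c : W) (hc : ¬ cs.IsLeftDescent c i) :
    T (cs.simple i) * T c = T (cs.simple i * c) := by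
  have := cs.not_isLeftDescent_iff.mp hc
  exact hmul _ _ (by rw [cs.length_simple]; omega)

private lemma heckeB_pos
    (hmul : ∀ w w' : W, cs.length (w * w') = cs.length w + cs.length w' →
      T w * T w' = T (w * w'))
    (hquad : ∀ i : B, (T (cs.simple i) + 1) * (T (cs.simple i) - algebraMap (Polynomial ℚ) H X) = 0)
    (i : B) (b : W) (hd : cs.IsLeftDescent b i) (x : H) :
    T.repr (T (cs.simple i) * x) b
      = T.repr x (cs.simple i * b) + (X - 1) * T.repr x b := by
  classical
  have key : ∀ c : W, T.repr (T (cs.simple i) * T c) b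
      = T.repr (T c) (cs.simple i * b) + (X - 1) * T.repr (T c) b := by
    intro c
    have hcb : (cs.simple i * c = b) ↔ (c = cs.simple i * b) := by
      constructor
      · rintro rfl; rw [cs.simple_mul_simple_cancel_left]
      · rintro rfl; rw [cs.simple_mul_simple_cancel_left]
    by_cases hc : cs.IsLeftDescent c i
    · rw [heckeA_pos cs T hmul hquad i c hc]
      have hne : ¬ (cs.simple i * c = b) := by
        intro he
        have hnd := cs.isLeftDescent_iff_not_isLeftDescent_mul.mp hc
        rw [he] at hnd
        exact hnd hd
      have hne2 : ¬ (c = cs.simple i * b) := fun he => hne (hcb.mpr he)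
      simp [Module.Basis.repr_self, Finsupp.single_apply, hne, hne2]
      split_ifs <;> simp
    · rw [heckeA_neg cs T hmul i c hc]
      have hnb : ¬ (c = b) := by rintro rfl; exact hc hd
      simp [Module.Basis.repr_self, Finsupp.single_apply, hcb, hnb]
  have hlin : (Finsupp.lapply b).comp
        ((T.repr : H →ₗ[Polynomial ℚ] (W →₀ Polynomial ℚ)).comp
          (LinearMap.mulLeft (Polynomial ℚ) (T (cs.simple i))))
      = (Finsupp.lapply (cs.simple i * b)).comp
          (T.repr : H →ₗ[Polynomial ℚ] (W →₀ Polynomial ℚ))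
        + ((X : Polynomial ℚ) - 1) • (Finsupp.lapply b).comp
          (T.repr : H →ₗ[Polynomial ℚ] (W →₀ Polynomial ℚ)) := by
    apply T.ext
    intro c
    simpa [LinearMap.mulLeft_apply, smul_eq_mul] using key c
  simpa [LinearMap.mulLeft_apply, smul_eq_mul] using LinearMap.congr_fun hlin x

private lemma heckeB_neg
    (hmul : ∀ w w' : W, cs.length (w * w') = cs.length w + cs.length w' →
      T w * T w' = T (w * w'))
    (hquad : ∀ i : B, (T (cs.simple i) + 1) * (T (cs.simple i) - algebraMap (Polynomial ℚ) H X) = 0)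
    (i : B) (b : W) (hd : ¬ cs.IsLeftDescent b i) (x : H) :
    T.repr (T (cs.simple i) * x) b = X * T.repr x (cs.simple i * b) := by
  classical
  have key : ∀ c : W, T.repr (T (cs.simple i) * T c) b
      = X * T.repr (T c) (cs.simple i * b) := by
    intro c
    have hcb : (cs.simple i * c = b) ↔ (c = cs.simple i * b) := by
      constructor
      · rintro rfl; rw [cs.simple_mul_simple_cancel_left]
      · rintro rfl; rw [cs.simple_mul_simple_cancel_left]
    by_cases hc : cs.IsLeftDescent c i
    · rw [heckeA_pos cs T hmul hquad i c hc]
      have hnb : ¬ (c = b) := by rintro rfl; exact hd hc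
      simp [Module.Basis.repr_self, Finsupp.single_apply, hcb, hnb]
    · rw [heckeA_neg cs T hmul i c hc]
      have hne : ¬ (cs.simple i * c = b) := by
        intro he
        have : cs.IsLeftDescent (cs.simple i * c) i := by
          by_contra hn
          exact hc (cs.isLeftDescent_iff_not_isLeftDescent_mul.mpr hn)
        rw [he] at this
        exact hd this
      have hne2 : ¬ (c = cs.simple i * b) := fun he => hne (hcb.mpr he)
      simp [Module.Basis.repr_self, Finsupp.single_apply, hne, hne2]
  have hlin : (Finsupp.lapply b).comp
        ((T.repr : H →ₗ[Polynomial ℚ] (W →₀ Polynomial ℚ)).comp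
          (LinearMap.mulLeft (Polynomial ℚ) (T (cs.simple i))))
      = (X : Polynomial ℚ) • ((Finsupp.lapply (cs.simple i * b)).comp
          (T.repr : H →ₗ[Polynomial ℚ] (W →₀ Polynomial ℚ))) := by
    apply T.ext
    intro c
    simpa [LinearMap.mulLeft_apply, smul_eq_mul] using key c
  simpa [LinearMap.mulLeft_apply, smul_eq_mul] using LinearMap.congr_fun hlin x

/-- Splitting off the first letter of a reduced word. -/
private lemma heckeCons
    (hmul : ∀ w w' : W, cs.length (w * w') = cs.length w + cs.length w' →
      T w * T w' = T (w * w'))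
    (i : B) (l₂ : List B) (hl : cs.IsReduced (i :: l₂)) :
    cs.IsReduced l₂ ∧
      T (cs.wordProd (i :: l₂)) = T (cs.simple i) * T (cs.wordProd l₂) := by
  have hl₂ : cs.IsReduced l₂ := by
    have := hl.drop 1
    simpa using this
  refine ⟨hl₂, ?_⟩
  rw [cs.wordProd_cons]
  refine (hmul _ _ ?_).symm
  have h1 : cs.length (cs.simple i * cs.wordProd l₂) = l₂.length + 1 := by
    have := hl
    rw [CoxeterSystem.IsReduced, cs.wordProd_cons] at this
    simpa using this
  rw [h1, cs.length_simple, hl₂]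
  omega

/-- Degree bound: the structure constants `φ(π l, a', b)` have degree at most `l.length`. -/
private lemma heckeC
    (hone : T 1 = 1)
    (hmul : ∀ w w' : W, cs.length (w * w') = cs.length w + cs.length w' →
      T w * T w' = T (w * w'))
    (hquad : ∀ i : B, (T (cs.simple i) + 1) * (T (cs.simple i) - algebraMap (Polynomial ℚ) H X) = 0)
    (l : List B) :
    cs.IsReduced l → ∀ (a' b : W) (k : ℕ), l.length < k →
      (T.repr (T (cs.wordProd l) * T a') b).coeff k = 0 := by
  classical
  induction l with
  | nil =>
    intro _ a' b k hk
    have hk0 : k ≠ 0 := by simp at hk; omega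
    rw [cs.wordProd_nil, hone, one_mul, Module.Basis.repr_self, Finsupp.single_apply]
    by_cases hab : a' = b <;> simp [hab, Polynomial.coeff_one, hk0]
  | cons i l₂ ih =>
    intro hl a' b k hk
    obtain ⟨hl₂, hsplit⟩ := heckeCons cs T hmul i l₂ hl
    rw [hsplit, mul_assoc]
    simp only [List.length_cons] at hk
    obtain ⟨m, rfl⟩ : ∃ m, k = m + 1 := ⟨k - 1, by omega⟩
    by_cases hd : cs.IsLeftDescent b i
    · rw [heckeB_pos cs T hmul hquad i b hd]
      rw [Polynomial.coeff_add, sub_mul, one_mul, Polynomial.coeff_sub,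
        Polynomial.coeff_X_mul,
        ih hl₂ a' (cs.simple i * b) (m + 1) (by omega),
        ih hl₂ a' b m (by omega), ih hl₂ a' b (m + 1) (by omega)]
      ring
    · rw [heckeB_neg cs T hmul hquad i b hd, Polynomial.coeff_X_mul]
      exact ih hl₂ a' (cs.simple i * b) m (by omega)

/-- Claim 1. -/
private lemma hecke1
    (hone : T 1 = 1)
    (hmul : ∀ w w' : W, cs.length (w * w') = cs.length w + cs.length w' →
      T w * T w' = T (w * w'))
    (hquad : ∀ i : B, (T (cs.simple i) + 1) * (T (cs.simple i) - algebraMap (Polynomial ℚ) H X) = 0)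
    (l : List B) :
    cs.IsReduced l → ∀ (a' b : W),
      (T.repr (T (cs.wordProd l) * T a') b).coeff l.length ≠ 0 →
      a' = b ∨ cs.length b < cs.length a' := by
  classical
  induction l with
  | nil =>
    intro _ a' b h
    rw [cs.wordProd_nil, hone, one_mul, Module.Basis.repr_self, Finsupp.single_apply] at h
    by_cases hab : a' = b
    · exact Or.inl hab
    · simp [hab] at h
  | cons i l₂ ih =>
    intro hl a' b h
    obtain ⟨hl₂, hsplit⟩ := heckeCons cs T hmul i l₂ hl
    rw [hsplit, mul_assoc] at h
    simp only [List.length_cons] at h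
    by_cases hd : cs.IsLeftDescent b i
    · rw [heckeB_pos cs T hmul hquad i b hd, Polynomial.coeff_add, sub_mul, one_mul,
        Polynomial.coeff_sub, Polynomial.coeff_X_mul,
        heckeC cs T hone hmul hquad l₂ hl₂ a' (cs.simple i * b) (l₂.length + 1) (by omega),
        heckeC cs T hone hmul hquad l₂ hl₂ a' b (l₂.length + 1) (by omega)] at h
      simp only [zero_add, sub_zero] at h
      exact ih hl₂ a' b h
    · rw [heckeB_neg cs T hmul hquad i b hd, Polynomial.coeff_X_mul] at h
      have hlen : cs.length (cs.simple i * b) = cs.length b + 1 :=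
        cs.not_isLeftDescent_iff.mp hd
      rcases ih hl₂ a' (cs.simple i * b) h with h1 | h1
      · right; rw [← h1] at hlen; omega
      · right; omega

/-- Claim 2. -/
private lemma hecke2
    (hone : T 1 = 1)
    (hmul : ∀ w w' : W, cs.length (w * w') = cs.length w + cs.length w' →
      T w * T w' = T (w * w'))
    (hquad : ∀ i : B, (T (cs.simple i) + 1) * (T (cs.simple i) - algebraMap (Polynomial ℚ) H X) = 0)
    (l : List B) :
    cs.IsReduced l → ∀ (a' b : W),
      (T.repr (T (cs.wordProd l) * T a') b).coeff l.length ≠ 0 →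
      ¬ (cs.length b < cs.length a') →
      a' = b ∧ ∀ j ∈ l, cs.IsLeftDescent a' j := by
  classical
  induction l with
  | nil =>
    intro _ a' b h _
    rw [cs.wordProd_nil, hone, one_mul, Module.Basis.repr_self, Finsupp.single_apply] at h
    by_cases hab : a' = b
    · exact ⟨hab, by simp⟩
    · simp [hab] at h
  | cons i l₂ ih =>
    intro hl a' b h hnlt
    obtain ⟨hl₂, hsplit⟩ := heckeCons cs T hmul i l₂ hl
    rw [hsplit, mul_assoc] at h
    simp only [List.length_cons] at h
    by_cases hd : cs.IsLeftDescent b i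
    · rw [heckeB_pos cs T hmul hquad i b hd, Polynomial.coeff_add, sub_mul, one_mul,
        Polynomial.coeff_sub, Polynomial.coeff_X_mul,
        heckeC cs T hone hmul hquad l₂ hl₂ a' (cs.simple i * b) (l₂.length + 1) (by omega),
        heckeC cs T hone hmul hquad l₂ hl₂ a' b (l₂.length + 1) (by omega)] at h
      simp only [zero_add, sub_zero] at h
      obtain ⟨hab, hall⟩ := ih hl₂ a' b h hnlt
      refine ⟨hab, ?_⟩
      intro j hj
      rcases List.mem_cons.mp hj with rfl | hj2
      · rw [hab]; exact hd
      · exact hall j hj2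
    · exfalso
      rw [heckeB_neg cs T hmul hquad i b hd, Polynomial.coeff_X_mul] at h
      have hlen : cs.length (cs.simple i * b) = cs.length b + 1 :=
        cs.not_isLeftDescent_iff.mp hd
      rcases hecke1 cs T hone hmul hquad l₂ hl₂ a' (cs.simple i * b) h with h1 | h1
      · rw [← h1] at hlen; omega
      · omega

end HeckeAux

/-- if the coefficient of `q^{ℓ(a)}` in the structure constant `φ(a,a',b)`
is nonzero, then either `a' = b` and the support of `a` lies in the left descent set of
`a'`, or `ℓ(b) < ℓ(a')`. -/
theorem hecke_structure_constant_leading_coeff_ne_zero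
    {B W : Type} [Group W] [Finite W] {M : CoxeterMatrix B} (cs : CoxeterSystem M W)
    (H : Type) [Ring H] [Algebra (Polynomial ℚ) H]
    (T : Module.Basis W (Polynomial ℚ) H)
    (hone : T 1 = 1)
    (hmul : ∀ w w' : W, cs.length (w * w') = cs.length w + cs.length w' →
      T w * T w' = T (w * w'))
    (hquad : ∀ i : B, (T (cs.simple i) + 1) * (T (cs.simple i) - algebraMap (Polynomial ℚ) H X) = 0)
    (a a' b : W)
    (h : (T.repr (T a * T a') b).coeff (cs.length a) ≠ 0) :
    (a' = b ∧ ∀ i ∈ cs.support a, cs.IsLeftDescent a' i) ∨ cs.length b < cs.length a' := by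
  by_cases hlt : cs.length b < cs.length a'
  · exact Or.inr hlt
  · left
    have hk : ∀ l : List B, cs.IsReduced l → cs.wordProd l = a →
        (T.repr (T (cs.wordProd l) * T a') b).coeff l.length ≠ 0 := by
      intro l hl hla
      have hlen : l.length = cs.length a := by rw [← hla]; exact hl.symm
      rw [hla, hlen]
      exact h
    obtain ⟨l, hl, ha⟩ := cs.exists_reduced_word' a
    refine ⟨(hecke2 cs T hone hmul hquad l hl a' b (hk l hl ha.symm) hlt).1, ?_⟩
    intro j hj
    obtain ⟨l', hl', hw', hj'⟩ := hj
    exact (hecke2 cs T hone hmul hquad l' hl' a' b (hk l' hl' hw') hlt).2 j hj'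
end

section
/- With notation as above, if a'=b and every simple reflection occurring in a reduced expression of a lies in the left descent set of a', then the coefficient of q^{ℓ(a)} in φ(a,a',b) equals 1. -/
open Polynomial

section HeckeAux

open scoped Classical

variable {B W : Type} [Group W] {M : CoxeterMatrix B} (cs : CoxeterSystem M W)
variable {H : Type} [Ring H] [Algebra (Polynomial ℚ) H]
variable (T : Module.Basis W (Polynomial ℚ) H)

/-- Quadratic relation in expanded form. -/
theorem hecke_TsTs
    (hquad : ∀ i : B, (T (cs.simple i) + 1) * (T (cs.simple i) - algebraMap (Polynomial ℚ) H X) = 0)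
    (i : B) :
    T (cs.simple i) * T (cs.simple i)
      = (X : Polynomial ℚ) • T (cs.simple i) + algebraMap (Polynomial ℚ) H X - T (cs.simple i) := by
  have h := hquad i
  have hc : T (cs.simple i) * algebraMap (Polynomial ℚ) H X = (X : Polynomial ℚ) • T (cs.simple i) := by
    rw [Algebra.smul_def, Algebra.commutes]
  have hexp : (T (cs.simple i) + 1) * (T (cs.simple i) - algebraMap (Polynomial ℚ) H X)
      = T (cs.simple i) * T (cs.simple i) - (X : Polynomial ℚ) • T (cs.simple i)
        + T (cs.simple i) - algebraMap (Polynomial ℚ) H X := by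
    rw [add_mul, one_mul, mul_sub, hc]
    abel
  rw [hexp] at h
  have h2 : T (cs.simple i) * T (cs.simple i)
      - ((X : Polynomial ℚ) • T (cs.simple i) + algebraMap (Polynomial ℚ) H X - T (cs.simple i)) = 0 := by
    rw [← h]; abel
  exact sub_eq_zero.mp h2

theorem hecke_mul_not_descent
    (hmul : ∀ w w' : W, cs.length (w * w') = cs.length w + cs.length w' →
      T w * T w' = T (w * w'))
    {w : W} {i : B} (hd : ¬ cs.IsLeftDescent w i) :
    T (cs.simple i) * T w = T (cs.simple i * w) := by
  apply hmul
  rw [cs.length_simple]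
  rw [cs.not_isLeftDescent_iff] at hd
  omega

theorem hecke_mul_descent
    (hmul : ∀ w w' : W, cs.length (w * w') = cs.length w + cs.length w' →
      T w * T w' = T (w * w'))
    (hquad : ∀ i : B, (T (cs.simple i) + 1) * (T (cs.simple i) - algebraMap (Polynomial ℚ) H X) = 0)
    {w : W} {i : B} (hd : cs.IsLeftDescent w i) :
    T (cs.simple i) * T w = (X : Polynomial ℚ) • T w - T w + (X : Polynomial ℚ) • T (cs.simple i * w) := by
  have hlen := cs.isLeftDescent_iff.mp hd
  have h2 : T (cs.simple i) * T (cs.simple i * w) = T w := by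
    have := hmul (cs.simple i) (cs.simple i * w) (by
      rw [cs.simple_mul_simple_cancel_left, cs.length_simple]
      omega)
    rwa [cs.simple_mul_simple_cancel_left] at this
  calc T (cs.simple i) * T w
      = (T (cs.simple i) * T (cs.simple i)) * T (cs.simple i * w) := by
        rw [mul_assoc, h2]
    _ = (X : Polynomial ℚ) • T w - T w + (X : Polynomial ℚ) • T (cs.simple i * w) := by
        rw [hecke_TsTs cs T hquad i, sub_mul, add_mul, smul_mul_assoc, h2,
          Algebra.smul_def, Algebra.smul_def]
        abel

theorem hecke_descent_not_descent_smul {w : W} {i : B} (hd : cs.IsLeftDescent w i) :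
    ¬ cs.IsLeftDescent (cs.simple i * w) i := by
  intro h
  rw [CoxeterSystem.IsLeftDescent, cs.simple_mul_simple_cancel_left] at h
  exact absurd hd (by simp [CoxeterSystem.IsLeftDescent]; omega)

/-- The key recursion for structure coefficients under left multiplication by `T s`. -/
theorem hecke_step
    (hmul : ∀ w w' : W, cs.length (w * w') = cs.length w + cs.length w' →
      T w * T w' = T (w * w'))
    (hquad : ∀ i : B, (T (cs.simple i) + 1) * (T (cs.simple i) - algebraMap (Polynomial ℚ) H X) = 0)
    (i : B) (b : W) (h : H) :
    T.repr (T (cs.simple i) * h) b =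
      if cs.IsLeftDescent b i
      then (X - 1) * T.repr h b + T.repr h (cs.simple i * b)
      else X * T.repr h (cs.simple i * b) := by
  have key : ∀ x : W,
      T.repr (T (cs.simple i) * T x) b =
        if cs.IsLeftDescent b i
        then (X - 1) * T.repr (T x) b + T.repr (T x) (cs.simple i * b)
        else X * T.repr (T x) (cs.simple i * b) := by
    intro x
    by_cases hx : cs.IsLeftDescent x i
    · rw [hecke_mul_descent cs T hmul hquad hx]
      have hxx : cs.simple i * x ≠ x := by
        have := cs.isLeftDescent_iff.mp hx
        intro hc; rw [hc] at this; omega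
      simp only [map_add, map_sub, map_smul, T.repr_self, Finsupp.add_apply,
        Finsupp.sub_apply, Finsupp.smul_apply, Finsupp.single_apply, smul_eq_mul]
      by_cases hb : cs.IsLeftDescent b i
      · rw [if_pos hb]
        have hsx : cs.simple i * x ≠ b := by
          intro hc
          subst hc
          exact hecke_descent_not_descent_smul cs hx hb
        have hsb : x ≠ cs.simple i * b := by
          intro hc
          apply hsx
          rw [hc, cs.simple_mul_simple_cancel_left]
        rw [if_neg hsx, if_neg hsb]
        by_cases hxb : x = b <;> simp [hxb] <;> ring
      · rw [if_neg hb]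
        have hxb : x ≠ b := by
          intro hc; rw [hc] at hx; exact hb hx
        have hiff : (cs.simple i * x = b) ↔ (x = cs.simple i * b) := by
          constructor
          · intro hc; rw [← hc, cs.simple_mul_simple_cancel_left]
          · intro hc; rw [hc, cs.simple_mul_simple_cancel_left]
        rw [if_neg hxb]
        by_cases hc : cs.simple i * x = b
        · rw [if_pos hc, if_pos (hiff.mp hc)]; ring
        · rw [if_neg hc, if_neg (fun hh => hc (hiff.mpr hh))]; ring
    · rw [hecke_mul_not_descent cs T hmul hx]
      simp only [T.repr_self, Finsupp.single_apply]
      have hiff : (cs.simple i * x = b) ↔ (x = cs.simple i * b) := by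
        constructor
        · intro hc; rw [← hc, cs.simple_mul_simple_cancel_left]
        · intro hc; rw [hc, cs.simple_mul_simple_cancel_left]
      by_cases hb : cs.IsLeftDescent b i
      · rw [if_pos hb]
        have hxb : x ≠ b := by
          intro hc; rw [hc] at hx; exact hx hb
        rw [if_neg hxb]
        by_cases hc : cs.simple i * x = b
        · rw [if_pos hc, if_pos (hiff.mp hc)]; ring
        · rw [if_neg hc, if_neg (fun hh => hc (hiff.mpr hh))]; ring
      · rw [if_neg hb]
        by_cases hc : cs.simple i * x = b
        · exfalso
          apply hb
          subst hc
          rw [cs.not_isLeftDescent_iff] at hx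
          rw [CoxeterSystem.IsLeftDescent, cs.simple_mul_simple_cancel_left]
          omega
        · rw [if_neg hc, if_neg (fun hh => hc (hiff.mpr hh))]; ring
  by_cases hb : cs.IsLeftDescent b i
  · simp only [if_pos hb] at key ⊢
    let f : H →ₗ[Polynomial ℚ] Polynomial ℚ :=
      (Finsupp.lapply b).comp (T.repr.toLinearMap.comp
        (LinearMap.mulLeft (Polynomial ℚ) (T (cs.simple i))))
    let g : H →ₗ[Polynomial ℚ] Polynomial ℚ :=
      ((X : Polynomial ℚ) - 1) • ((Finsupp.lapply b).comp T.repr.toLinearMap)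
        + (Finsupp.lapply (cs.simple i * b)).comp T.repr.toLinearMap
    have hfg : f = g := T.ext (fun x => by
      simpa [f, g, smul_eq_mul] using key x)
    have := LinearMap.congr_fun hfg h
    simpa [f, g, smul_eq_mul] using this
  · simp only [if_neg hb] at key ⊢
    let f : H →ₗ[Polynomial ℚ] Polynomial ℚ :=
      (Finsupp.lapply b).comp (T.repr.toLinearMap.comp
        (LinearMap.mulLeft (Polynomial ℚ) (T (cs.simple i))))
    let g : H →ₗ[Polynomial ℚ] Polynomial ℚ :=
      (X : Polynomial ℚ) • ((Finsupp.lapply (cs.simple i * b)).comp T.repr.toLinearMap)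
    have hfg : f = g := T.ext (fun x => by
      simpa [f, g, smul_eq_mul] using key x)
    have := LinearMap.congr_fun hfg h
    simpa [f, g, smul_eq_mul] using this

/-- Degree bound on structure coefficients. -/
theorem hecke_deg
    (hone : T 1 = 1)
    (hmul : ∀ w w' : W, cs.length (w * w') = cs.length w + cs.length w' →
      T w * T w' = T (w * w'))
    (hquad : ∀ i : B, (T (cs.simple i) + 1) * (T (cs.simple i) - algebraMap (Polynomial ℚ) H X) = 0) :
    ∀ (n : ℕ) (c : W), cs.length c = n → ∀ (w b : W) (m : ℕ),
      cs.length c + cs.length w < m + cs.length b →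
      (T.repr (T c * T w) b).coeff m = 0 := by
  intro n
  induction n with
  | zero =>
    intro c hc w b m hlt
    have hc1 : c = 1 := cs.length_eq_zero_iff.mp hc
    subst hc1
    rw [hone, one_mul, T.repr_self, Finsupp.single_apply]
    by_cases hwb : w = b
    · subst hwb
      rw [if_pos rfl, Polynomial.coeff_one]
      rw [hc] at hlt
      have : m ≠ 0 := by omega
      simp [this]
    · rw [if_neg hwb, Polynomial.coeff_zero]
  | succ n ih =>
    intro c hc w b m hlt
    have hc1 : c ≠ 1 := by
      intro hc1; rw [hc1, cs.length_one] at hc; omega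
    obtain ⟨i, hi⟩ := cs.exists_leftDescent_of_ne_one hc1
    have hlen : cs.length (cs.simple i * c) = n := by
      have := cs.isLeftDescent_iff.mp hi
      omega
    have hTc : T c = T (cs.simple i) * T (cs.simple i * c) := by
      have := hmul (cs.simple i) (cs.simple i * c) (by
        rw [cs.simple_mul_simple_cancel_left, cs.length_simple]
        omega)
      rw [this, cs.simple_mul_simple_cancel_left]
    rw [hTc, mul_assoc,
      hecke_step cs T hmul hquad i b (T (cs.simple i * c) * T w)]
    by_cases hb : cs.IsLeftDescent b i
    · rw [if_pos hb]
      have hlb := cs.isLeftDescent_iff.mp hb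
      rw [Polynomial.coeff_add, sub_mul, one_mul, Polynomial.coeff_sub]
      have h1 : (T.repr (T (cs.simple i * c) * T w) b).coeff m = 0 :=
        ih _ hlen w b m (by omega)
      have h2 : (X * T.repr (T (cs.simple i * c) * T w) b).coeff m = 0 := by
        match m with
        | 0 =>
          rw [Polynomial.mul_coeff_zero, Polynomial.coeff_X_zero, zero_mul]
        | (k + 1) =>
          rw [Polynomial.coeff_X_mul]
          exact ih _ hlen w b k (by omega)
      have h3 : (T.repr (T (cs.simple i * c) * T w) (cs.simple i * b)).coeff m = 0 := by
        apply ih _ hlen w (cs.simple i * b) m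
        omega
      rw [h1, h2, h3]
      ring
    · rw [if_neg hb]
      have hlb := cs.not_isLeftDescent_iff.mp hb
      match m with
      | 0 =>
        rw [Polynomial.mul_coeff_zero, Polynomial.coeff_X_zero, zero_mul]
      | (k + 1) =>
        rw [Polynomial.coeff_X_mul]
        apply ih _ hlen w (cs.simple i * b) k
        omega

end HeckeAux

/-- if `a' = b` and the support of `a` is contained in the left descent set
of `a'`, then the coefficient of `q^{ℓ(a)}` in `φ(a,a',b)` equals `1`. -/
theorem hecke_structure_constant_leading_coeff_eq_one
    {B W : Type} [Group W] [Finite W] {M : CoxeterMatrix B} (cs : CoxeterSystem M W)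
    (H : Type) [Ring H] [Algebra (Polynomial ℚ) H]
    (T : Module.Basis W (Polynomial ℚ) H)
    (hone : T 1 = 1)
    (hmul : ∀ w w' : W, cs.length (w * w') = cs.length w + cs.length w' →
      T w * T w' = T (w * w'))
    (hquad : ∀ i : B, (T (cs.simple i) + 1) * (T (cs.simple i) - algebraMap (Polynomial ℚ) H X) = 0)
    (a a' b : W)
    (heq : a' = b)
    (hsupp : ∀ i ∈ cs.support a, cs.IsLeftDescent a' i) :
    (T.repr (T a * T a') b).coeff (cs.length a) = 1 := by
  subst heq
  suffices h : ∀ (n : ℕ) (a : W), cs.length a = n →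
      (∀ i ∈ cs.support a, cs.IsLeftDescent a' i) →
      (T.repr (T a * T a') a').coeff (cs.length a) = 1 by
    exact h (cs.length a) a rfl hsupp
  intro n
  induction n with
  | zero =>
    intro a ha _
    have ha1 : a = 1 := cs.length_eq_zero_iff.mp ha
    subst ha1
    rw [hone, one_mul, T.repr_self, cs.length_one]
    simp
  | succ n ih =>
    intro a ha hsupp
    have ha1 : a ≠ 1 := by
      intro hc; rw [hc, cs.length_one] at ha; omega
    obtain ⟨i, hi⟩ := cs.exists_rightDescent_of_ne_one ha1
    have hlc := cs.isRightDescent_iff.mp hi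
    set c := a * cs.simple i with hcdef
    have hlenc : cs.length c = n := by omega
    have hca : c * cs.simple i = a := cs.simple_mul_simple_cancel_right i
    -- support facts
    have hsupport : ∀ j, j ∈ cs.support c ∨ j = i → j ∈ cs.support a := by
      intro j hj
      obtain ⟨l, hred, hprod, hmem⟩ :
          ∃ l : List B, cs.IsReduced l ∧ cs.wordProd l = c ∧ (j ∈ l ∨ j = i) := by
        rcases hj with hj | hj
        · obtain ⟨l, hred, hprod, hmem⟩ := hj
          exact ⟨l, hred, hprod, Or.inl hmem⟩
        · obtain ⟨l, hred, hprod⟩ := cs.exists_reduced_word' c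
          exact ⟨l, hred, hprod.symm, Or.inr hj⟩
      refine ⟨l ++ [i], ?_, ?_, ?_⟩
      · have hlenl : l.length = n := by
          have := hred
          rw [CoxeterSystem.IsReduced, hprod] at this
          omega
        rw [CoxeterSystem.IsReduced, cs.wordProd_append, hprod,
          cs.wordProd_singleton, hca]
        simp [ha, hlenl]
      · rw [cs.wordProd_append, hprod, cs.wordProd_singleton, hca]
      · rcases hmem with hm | hm
        · exact List.mem_append_left _ hm
        · subst hm; exact List.mem_append_right _ (List.mem_singleton_self _)
    have hd : cs.IsLeftDescent a' i := hsupp i (hsupport i (Or.inr rfl))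
    have hsuppc : ∀ j ∈ cs.support c, cs.IsLeftDescent a' j := by
      intro j hj
      exact hsupp j (hsupport j (Or.inl hj))
    -- algebra
    have hTa : T a = T c * T (cs.simple i) := by
      have := hmul c (cs.simple i) (by rw [hca, cs.length_simple]; omega)
      rw [this, hca]
    have hla' := cs.isLeftDescent_iff.mp hd
    rw [hTa, mul_assoc, hecke_mul_descent cs T hmul hquad hd]
    have hexp : T c * ((X : Polynomial ℚ) • T a' - T a' + (X : Polynomial ℚ) • T (cs.simple i * a'))
        = (X : Polynomial ℚ) • (T c * T a') - T c * T a' + (X : Polynomial ℚ) • (T c * T (cs.simple i * a')) := by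
      rw [mul_add, mul_sub, mul_smul_comm, mul_smul_comm]
    rw [hexp]
    simp only [map_add, map_sub, map_smul, Finsupp.add_apply, Finsupp.sub_apply,
      Finsupp.smul_apply, smul_eq_mul, Polynomial.coeff_add, Polynomial.coeff_sub]
    have h1 : (X * T.repr (T c * T a') a').coeff (cs.length a)
        = (T.repr (T c * T a') a').coeff n := by
      rw [ha, Polynomial.coeff_X_mul]
    have h2 : (T.repr (T c * T a') a').coeff (cs.length a) = 0 := by
      apply hecke_deg cs T hone hmul hquad n c hlenc a' a'
      omega
    have h3 : (X * T.repr (T c * T (cs.simple i * a')) a').coeff (cs.length a) = 0 := by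
      rw [ha, Polynomial.coeff_X_mul]
      apply hecke_deg cs T hone hmul hquad n c hlenc (cs.simple i * a') a'
      omega
    have hih := ih c hlenc hsuppc
    rw [hlenc] at hih
    rw [h1, h2, h3, hih]
    ring
end

section
/- If the coefficient of q^{ℓ(a)+ℓ(a'')} in f(a,a',a'',a') is nonzero, then the support of a is contained in the left descent set of a' and the support of a'' is contained in the right descent set of a'. -/
open Polynomial

section Aux

variable {B W : Type} [Group W] {M : CoxeterMatrix B} (cs : CoxeterSystem M W)
  {H : Type} [Ring H] [Algebra (Polynomial ℚ) H] (T : Module.Basis W (Polynomial ℚ) H)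

lemma aux_Ts_sq
    (hquad : ∀ i : B, (T (cs.simple i) + 1) * (T (cs.simple i) - algebraMap (Polynomial ℚ) H X) = 0)
    (i : B) :
    T (cs.simple i) * T (cs.simple i)
      = (X : Polynomial ℚ) • T (cs.simple i) - T (cs.simple i) + (X : Polynomial ℚ) • (1 : H) := by
  have h := hquad i
  have hA : T (cs.simple i) * algebraMap (Polynomial ℚ) H X
      = (X : Polynomial ℚ) • T (cs.simple i) := by
    rw [← Algebra.commutes, ← Algebra.smul_def]
  have h1 : algebraMap (Polynomial ℚ) H X = (X : Polynomial ℚ) • (1 : H) :=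
    Algebra.algebraMap_eq_smul_one X
  rw [add_mul, one_mul, mul_sub, hA, h1] at h
  have h2 : T (cs.simple i) * T (cs.simple i)
      - ((X : Polynomial ℚ) • T (cs.simple i) - T (cs.simple i) + (X : Polynomial ℚ) • (1:H)) = 0 := by
    rw [← h]; abel
  exact sub_eq_zero.mp h2

lemma aux_mulL_desc
    (hmul : ∀ w w' : W, cs.length (w * w') = cs.length w + cs.length w' →
      T w * T w' = T (w * w'))
    (hquad : ∀ i : B, (T (cs.simple i) + 1) * (T (cs.simple i) - algebraMap (Polynomial ℚ) H X) = 0)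
    {i : B} {w : W} (hd : cs.IsLeftDescent w i) :
    T (cs.simple i) * T w
      = (X : Polynomial ℚ) • T (cs.simple i * w) + ((X : Polynomial ℚ) - 1) • T w := by
  have hlen : cs.length (cs.simple i * (cs.simple i * w))
      = cs.length (cs.simple i) + cs.length (cs.simple i * w) := by
    rw [cs.simple_mul_simple_cancel_left, cs.length_simple]
    have := cs.isLeftDescent_iff.mp hd
    omega
  have hTw : T (cs.simple i) * T (cs.simple i * w) = T w := by
    have := hmul (cs.simple i) (cs.simple i * w) hlen
    rwa [cs.simple_mul_simple_cancel_left] at this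
  calc T (cs.simple i) * T w
      = (T (cs.simple i) * T (cs.simple i)) * T (cs.simple i * w) := by
        rw [mul_assoc, hTw]
    _ = (X : Polynomial ℚ) • (T (cs.simple i) * T (cs.simple i * w))
        - T (cs.simple i) * T (cs.simple i * w)
        + (X : Polynomial ℚ) • T (cs.simple i * w) := by
        rw [aux_Ts_sq cs T hquad i, add_mul, sub_mul, smul_mul_assoc, smul_mul_assoc, one_mul]
    _ = (X : Polynomial ℚ) • T (cs.simple i * w) + ((X : Polynomial ℚ) - 1) • T w := by
        rw [hTw, sub_smul, one_smul]; abel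

lemma aux_mulL_asc
    (hmul : ∀ w w' : W, cs.length (w * w') = cs.length w + cs.length w' →
      T w * T w' = T (w * w'))
    {i : B} {w : W} (hd : ¬ cs.IsLeftDescent w i) :
    T (cs.simple i) * T w = T (cs.simple i * w) := by
  apply hmul
  rw [cs.length_simple, cs.not_isLeftDescent_iff.mp hd]; omega

lemma aux_mulR_desc
    (hmul : ∀ w w' : W, cs.length (w * w') = cs.length w + cs.length w' →
      T w * T w' = T (w * w'))
    (hquad : ∀ i : B, (T (cs.simple i) + 1) * (T (cs.simple i) - algebraMap (Polynomial ℚ) H X) = 0)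
    {i : B} {w : W} (hd : cs.IsRightDescent w i) :
    T w * T (cs.simple i)
      = (X : Polynomial ℚ) • T (w * cs.simple i) + ((X : Polynomial ℚ) - 1) • T w := by
  have hlen : cs.length ((w * cs.simple i) * cs.simple i)
      = cs.length (w * cs.simple i) + cs.length (cs.simple i) := by
    rw [cs.simple_mul_simple_cancel_right, cs.length_simple]
    have := cs.isRightDescent_iff.mp hd
    omega
  have hTw : T (w * cs.simple i) * T (cs.simple i) = T w := by
    have := hmul (w * cs.simple i) (cs.simple i) hlen
    rwa [cs.simple_mul_simple_cancel_right] at this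
  calc T w * T (cs.simple i)
      = T (w * cs.simple i) * (T (cs.simple i) * T (cs.simple i)) := by
        rw [← mul_assoc, hTw]
    _ = (X : Polynomial ℚ) • (T (w * cs.simple i) * T (cs.simple i))
        - T (w * cs.simple i) * T (cs.simple i)
        + (X : Polynomial ℚ) • T (w * cs.simple i) := by
        rw [aux_Ts_sq cs T hquad i, mul_add, mul_sub, mul_smul_comm, mul_smul_comm, mul_one]
    _ = (X : Polynomial ℚ) • T (w * cs.simple i) + ((X : Polynomial ℚ) - 1) • T w := by
        rw [hTw, sub_smul, one_smul]; abel

lemma aux_mulR_asc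
    (hmul : ∀ w w' : W, cs.length (w * w') = cs.length w + cs.length w' →
      T w * T w' = T (w * w'))
    {i : B} {w : W} (hd : ¬ cs.IsRightDescent w i) :
    T w * T (cs.simple i) = T (w * cs.simple i) := by
  apply hmul
  rw [cs.length_simple, cs.not_isRightDescent_iff.mp hd]


lemma aux_reprL_desc
    (hmul : ∀ w w' : W, cs.length (w * w') = cs.length w + cs.length w' →
      T w * T w' = T (w * w'))
    (hquad : ∀ i : B, (T (cs.simple i) + 1) * (T (cs.simple i) - algebraMap (Polynomial ℚ) H X) = 0)
    {i : B} {b : W} (hd : cs.IsLeftDescent b i) (x : H) :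
    T.repr (T (cs.simple i) * x) b
      = T.repr x (cs.simple i * b) + (X - 1) * T.repr x b := by
  have key : (Finsupp.lapply b ∘ₗ (T.repr : H →ₗ[Polynomial ℚ] (W →₀ Polynomial ℚ))
        ∘ₗ LinearMap.mulLeft (Polynomial ℚ) (T (cs.simple i)))
      = (Finsupp.lapply (cs.simple i * b) ∘ₗ (T.repr : H →ₗ[Polynomial ℚ] (W →₀ Polynomial ℚ)))
        + ((X - 1 : Polynomial ℚ) •
            (Finsupp.lapply b ∘ₗ (T.repr : H →ₗ[Polynomial ℚ] (W →₀ Polynomial ℚ)))) := by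
    apply T.ext
    intro c
    simp only [LinearMap.comp_apply, LinearMap.mulLeft_apply, LinearMap.add_apply,
      LinearMap.smul_apply, Finsupp.lapply_apply, LinearEquiv.coe_coe, smul_eq_mul]
    have hiff : cs.simple i * c = b ↔ c = cs.simple i * b := by
      constructor
      · rintro rfl; rw [cs.simple_mul_simple_cancel_left]
      · rintro rfl; rw [cs.simple_mul_simple_cancel_left]
    have hne : ¬ (cs.simple i * b = b) := fun h => cs.length_simple_mul_ne b i (by rw [h])
    have hne' : ¬ (b = cs.simple i * b) := fun h => hne h.symm
    by_cases hc : cs.IsLeftDescent c i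
    · rw [aux_mulL_desc cs T hmul hquad hc]
      simp only [map_add, map_smul, Module.Basis.repr_self, Finsupp.add_apply, Finsupp.smul_apply,
        Finsupp.single_apply, smul_eq_mul]
      by_cases h1 : c = b
      · subst h1
        have hne : ¬ (cs.simple i * c = c) := fun h => cs.length_simple_mul_ne c i (by rw [h])
        have hne' : ¬ (c = cs.simple i * c) := fun h => hne h.symm
        simp [hne, hne']
      · by_cases h2 : c = cs.simple i * b
        · exfalso
          subst h2
          have e1 := cs.isLeftDescent_iff.mp hc
          have e2 := cs.isLeftDescent_iff.mp hd
          rw [cs.simple_mul_simple_cancel_left] at e1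
          omega
        · have h3 : ¬ (cs.simple i * c = b) := fun h => h2 (hiff.mp h)
          simp [h1, h2, h3, hne, hne']
    · rw [aux_mulL_asc cs T hmul hc]
      simp only [Module.Basis.repr_self, Finsupp.single_apply]
      by_cases h1 : c = b
      · exfalso; exact hc (h1 ▸ hd)
      · by_cases h2 : c = cs.simple i * b
        · have h3 : cs.simple i * c = b := hiff.mpr h2
          simp [h1, h2, h3, hne, hne']
        · have h3 : ¬ (cs.simple i * c = b) := fun h => h2 (hiff.mp h)
          simp [h1, h2, h3, hne, hne']
  have := DFunLike.congr_fun key x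
  simpa using this


lemma aux_reprL_asc
    (hmul : ∀ w w' : W, cs.length (w * w') = cs.length w + cs.length w' →
      T w * T w' = T (w * w'))
    (hquad : ∀ i : B, (T (cs.simple i) + 1) * (T (cs.simple i) - algebraMap (Polynomial ℚ) H X) = 0)
    {i : B} {b : W} (hd : ¬ cs.IsLeftDescent b i) (x : H) :
    T.repr (T (cs.simple i) * x) b = X * T.repr x (cs.simple i * b) := by
  have key : (Finsupp.lapply b ∘ₗ (T.repr : H →ₗ[Polynomial ℚ] (W →₀ Polynomial ℚ))
        ∘ₗ LinearMap.mulLeft (Polynomial ℚ) (T (cs.simple i)))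
      = ((X : Polynomial ℚ) •
          (Finsupp.lapply (cs.simple i * b) ∘ₗ (T.repr : H →ₗ[Polynomial ℚ] (W →₀ Polynomial ℚ)))) := by
    apply T.ext
    intro c
    simp only [LinearMap.comp_apply, LinearMap.mulLeft_apply, LinearMap.smul_apply,
      Finsupp.lapply_apply, LinearEquiv.coe_coe, smul_eq_mul]
    have hiff : cs.simple i * c = b ↔ c = cs.simple i * b := by
      constructor
      · rintro rfl; rw [cs.simple_mul_simple_cancel_left]
      · rintro rfl; rw [cs.simple_mul_simple_cancel_left]
    have hne : ¬ (cs.simple i * b = b) := fun h => cs.length_simple_mul_ne b i (by rw [h])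
    have hne' : ¬ (b = cs.simple i * b) := fun h => hne h.symm
    by_cases hc : cs.IsLeftDescent c i
    · rw [aux_mulL_desc cs T hmul hquad hc]
      simp only [map_add, map_smul, Module.Basis.repr_self, Finsupp.add_apply, Finsupp.smul_apply,
        Finsupp.single_apply, smul_eq_mul]
      by_cases h1 : c = b
      · exact absurd (h1 ▸ hc) hd
      · by_cases h2 : c = cs.simple i * b
        · have h3 : cs.simple i * c = b := hiff.mpr h2
          simp [h1, h2, h3, hne, hne']
        · have h3 : ¬ (cs.simple i * c = b) := fun h => h2 (hiff.mp h)
          simp [h1, h2, h3]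
    · rw [aux_mulL_asc cs T hmul hc]
      simp only [Module.Basis.repr_self, Finsupp.single_apply]
      have h3 : ¬ (cs.simple i * c = b) := by
        intro h
        apply hd
        have h2 := hiff.mp h
        have e1 := cs.not_isLeftDescent_iff.mp hc
        rw [h2, cs.simple_mul_simple_cancel_left] at e1
        unfold CoxeterSystem.IsLeftDescent
        omega
      have h2 : ¬ (c = cs.simple i * b) := fun h => h3 (hiff.mpr h)
      simp [h2, h3]
  have := DFunLike.congr_fun key x
  simpa using this

lemma aux_reprR_desc
    (hmul : ∀ w w' : W, cs.length (w * w') = cs.length w + cs.length w' →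
      T w * T w' = T (w * w'))
    (hquad : ∀ i : B, (T (cs.simple i) + 1) * (T (cs.simple i) - algebraMap (Polynomial ℚ) H X) = 0)
    {i : B} {b : W} (hd : cs.IsRightDescent b i) (x : H) :
    T.repr (x * T (cs.simple i)) b
      = T.repr x (b * cs.simple i) + (X - 1) * T.repr x b := by
  have key : (Finsupp.lapply b ∘ₗ (T.repr : H →ₗ[Polynomial ℚ] (W →₀ Polynomial ℚ))
        ∘ₗ LinearMap.mulRight (Polynomial ℚ) (T (cs.simple i)))
      = (Finsupp.lapply (b * cs.simple i) ∘ₗ (T.repr : H →ₗ[Polynomial ℚ] (W →₀ Polynomial ℚ)))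
        + ((X - 1 : Polynomial ℚ) •
            (Finsupp.lapply b ∘ₗ (T.repr : H →ₗ[Polynomial ℚ] (W →₀ Polynomial ℚ)))) := by
    apply T.ext
    intro c
    simp only [LinearMap.comp_apply, LinearMap.mulRight_apply, LinearMap.add_apply,
      LinearMap.smul_apply, Finsupp.lapply_apply, LinearEquiv.coe_coe, smul_eq_mul]
    have hiff : c * cs.simple i = b ↔ c = b * cs.simple i := by
      constructor
      · rintro rfl; rw [cs.simple_mul_simple_cancel_right]
      · rintro rfl; rw [cs.simple_mul_simple_cancel_right]
    have hne : ¬ (b * cs.simple i = b) := fun h => cs.length_mul_simple_ne b i (by rw [h])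
    have hne' : ¬ (b = b * cs.simple i) := fun h => hne h.symm
    by_cases hc : cs.IsRightDescent c i
    · rw [aux_mulR_desc cs T hmul hquad hc]
      simp only [map_add, map_smul, Module.Basis.repr_self, Finsupp.add_apply, Finsupp.smul_apply,
        Finsupp.single_apply, smul_eq_mul]
      by_cases h1 : c = b
      · subst h1
        have hne2 : ¬ (c * cs.simple i = c) := fun h => cs.length_mul_simple_ne c i (by rw [h])
        have hne2' : ¬ (c = c * cs.simple i) := fun h => hne2 h.symm
        simp [hne2, hne2']
      · by_cases h2 : c = b * cs.simple i
        · exfalso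
          subst h2
          have e1 := cs.isRightDescent_iff.mp hc
          have e2 := cs.isRightDescent_iff.mp hd
          rw [cs.simple_mul_simple_cancel_right] at e1
          omega
        · have h3 : ¬ (c * cs.simple i = b) := fun h => h2 (hiff.mp h)
          simp [h1, h2, h3, hne, hne']
    · rw [aux_mulR_asc cs T hmul hc]
      simp only [Module.Basis.repr_self, Finsupp.single_apply]
      by_cases h1 : c = b
      · exact absurd (h1 ▸ hd) hc
      · by_cases h2 : c = b * cs.simple i
        · have h3 : c * cs.simple i = b := hiff.mpr h2
          simp [h1, h2, h3, hne, hne']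
        · have h3 : ¬ (c * cs.simple i = b) := fun h => h2 (hiff.mp h)
          simp [h1, h2, h3, hne, hne']
  have := DFunLike.congr_fun key x
  simpa using this

lemma aux_reprR_asc
    (hmul : ∀ w w' : W, cs.length (w * w') = cs.length w + cs.length w' →
      T w * T w' = T (w * w'))
    (hquad : ∀ i : B, (T (cs.simple i) + 1) * (T (cs.simple i) - algebraMap (Polynomial ℚ) H X) = 0)
    {i : B} {b : W} (hd : ¬ cs.IsRightDescent b i) (x : H) :
    T.repr (x * T (cs.simple i)) b = X * T.repr x (b * cs.simple i) := by
  have key : (Finsupp.lapply b ∘ₗ (T.repr : H →ₗ[Polynomial ℚ] (W →₀ Polynomial ℚ))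
        ∘ₗ LinearMap.mulRight (Polynomial ℚ) (T (cs.simple i)))
      = ((X : Polynomial ℚ) •
          (Finsupp.lapply (b * cs.simple i) ∘ₗ (T.repr : H →ₗ[Polynomial ℚ] (W →₀ Polynomial ℚ)))) := by
    apply T.ext
    intro c
    simp only [LinearMap.comp_apply, LinearMap.mulRight_apply, LinearMap.smul_apply,
      Finsupp.lapply_apply, LinearEquiv.coe_coe, smul_eq_mul]
    have hiff : c * cs.simple i = b ↔ c = b * cs.simple i := by
      constructor
      · rintro rfl; rw [cs.simple_mul_simple_cancel_right]
      · rintro rfl; rw [cs.simple_mul_simple_cancel_right]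
    have hne : ¬ (b * cs.simple i = b) := fun h => cs.length_mul_simple_ne b i (by rw [h])
    have hne' : ¬ (b = b * cs.simple i) := fun h => hne h.symm
    by_cases hc : cs.IsRightDescent c i
    · rw [aux_mulR_desc cs T hmul hquad hc]
      simp only [map_add, map_smul, Module.Basis.repr_self, Finsupp.add_apply, Finsupp.smul_apply,
        Finsupp.single_apply, smul_eq_mul]
      by_cases h1 : c = b
      · exact absurd (h1 ▸ hc) hd
      · by_cases h2 : c = b * cs.simple i
        · have h3 : c * cs.simple i = b := hiff.mpr h2
          simp [h1, h2, h3, hne, hne']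
        · have h3 : ¬ (c * cs.simple i = b) := fun h => h2 (hiff.mp h)
          simp [h1, h2, h3]
    · rw [aux_mulR_asc cs T hmul hc]
      simp only [Module.Basis.repr_self, Finsupp.single_apply]
      have h3 : ¬ (c * cs.simple i = b) := by
        intro h
        apply hd
        have h2 := hiff.mp h
        have e1 := cs.not_isRightDescent_iff.mp hc
        rw [h2, cs.simple_mul_simple_cancel_right] at e1
        unfold CoxeterSystem.IsRightDescent
        omega
      have h2 : ¬ (c = b * cs.simple i) := fun h => h3 (hiff.mpr h)
      simp [h2, h3]
  have := DFunLike.congr_fun key x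
  simpa using this


lemma aux_coeff_Xmul (p : Polynomial ℚ) (k : ℕ) :
    (X * p).coeff k = if k = 0 then 0 else p.coeff (k-1) := by
  cases k with
  | zero => simp [Polynomial.mul_coeff_zero]
  | succ n => simp [Polynomial.coeff_X_mul]

lemma aux_invL
    (hmul : ∀ w w' : W, cs.length (w * w') = cs.length w + cs.length w' →
      T w * T w' = T (w * w'))
    (hquad : ∀ i : B, (T (cs.simple i) + 1) * (T (cs.simple i) - algebraMap (Polynomial ℚ) H X) = 0)
    {i : B} {n : ℕ} {w₀ : W} {x : H}
    (hx : ∀ b k, (T.repr x b).coeff k ≠ 0 → k ≤ n ∧ k + cs.length b ≤ n + cs.length w₀) :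
    ∀ b k, (T.repr (T (cs.simple i) * x) b).coeff k ≠ 0 →
      k ≤ n + 1 ∧ k + cs.length b ≤ n + 1 + cs.length w₀ := by
  intro b k hk
  by_cases hd : cs.IsLeftDescent b i
  · rw [aux_reprL_desc cs T hmul hquad hd x, Polynomial.coeff_add, sub_mul, one_mul,
      Polynomial.coeff_sub, aux_coeff_Xmul] at hk
    have hb := cs.isLeftDescent_iff.mp hd
    have hor : (T.repr x (cs.simple i * b)).coeff k ≠ 0 ∨
        (T.repr x b).coeff (k-1) ≠ 0 ∨ (T.repr x b).coeff k ≠ 0 := by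
      by_contra hcon
      push_neg at hcon
      rw [hcon.1, hcon.2.1, hcon.2.2] at hk
      simp at hk
    rcases hor with h | h | h
    · have := hx _ _ h; omega
    · have := hx _ _ h; omega
    · have := hx _ _ h; omega
  · rw [aux_reprL_asc cs T hmul hquad hd x, aux_coeff_Xmul] at hk
    have hk0 : k ≠ 0 := by rintro rfl; simp at hk
    rw [if_neg hk0] at hk
    have := hx _ _ hk
    have hb := cs.not_isLeftDescent_iff.mp hd
    omega

lemma aux_invR
    (hmul : ∀ w w' : W, cs.length (w * w') = cs.length w + cs.length w' →
      T w * T w' = T (w * w'))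
    (hquad : ∀ i : B, (T (cs.simple i) + 1) * (T (cs.simple i) - algebraMap (Polynomial ℚ) H X) = 0)
    {i : B} {n : ℕ} {w₀ : W} {x : H}
    (hx : ∀ b k, (T.repr x b).coeff k ≠ 0 → k ≤ n ∧ k + cs.length b ≤ n + cs.length w₀) :
    ∀ b k, (T.repr (x * T (cs.simple i)) b).coeff k ≠ 0 →
      k ≤ n + 1 ∧ k + cs.length b ≤ n + 1 + cs.length w₀ := by
  intro b k hk
  by_cases hd : cs.IsRightDescent b i
  · rw [aux_reprR_desc cs T hmul hquad hd x, Polynomial.coeff_add, sub_mul, one_mul,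
      Polynomial.coeff_sub, aux_coeff_Xmul] at hk
    have hb := cs.isRightDescent_iff.mp hd
    have hor : (T.repr x (b * cs.simple i)).coeff k ≠ 0 ∨
        (T.repr x b).coeff (k-1) ≠ 0 ∨ (T.repr x b).coeff k ≠ 0 := by
      by_contra hcon
      push_neg at hcon
      rw [hcon.1, hcon.2.1, hcon.2.2] at hk
      simp at hk
    rcases hor with h | h | h
    · have := hx _ _ h; omega
    · have := hx _ _ h; omega
    · have := hx _ _ h; omega
  · rw [aux_reprR_asc cs T hmul hquad hd x, aux_coeff_Xmul] at hk
    have hk0 : k ≠ 0 := by rintro rfl; simp at hk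
    rw [if_neg hk0] at hk
    have := hx _ _ hk
    have hb := cs.not_isRightDescent_iff.mp hd
    omega

lemma aux_inv_base (w₀ : W) :
    ∀ b k, (T.repr (T w₀) b).coeff k ≠ 0 → k ≤ 0 ∧ k + cs.length b ≤ 0 + cs.length w₀ := by
  intro b k hk
  rcases eq_or_ne w₀ b with hb | hb
  · subst hb
    rw [Module.Basis.repr_self, Finsupp.single_eq_same] at hk
    have : k = 0 := by
      by_contra h
      rw [Polynomial.coeff_one, if_neg h] at hk
      exact hk rfl
    omega
  · rw [Module.Basis.repr_self, Finsupp.single_eq_of_ne' hb] at hk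
    simp at hk

lemma aux_keyL
    (hmul : ∀ w w' : W, cs.length (w * w') = cs.length w + cs.length w' →
      T w * T w' = T (w * w'))
    (hquad : ∀ i : B, (T (cs.simple i) + 1) * (T (cs.simple i) - algebraMap (Polynomial ℚ) H X) = 0)
    {i : B} {n : ℕ} {w₀ : W} {x : H}
    (hx : ∀ b k, (T.repr x b).coeff k ≠ 0 → k ≤ n ∧ k + cs.length b ≤ n + cs.length w₀)
    (hk : (T.repr (T (cs.simple i) * x) w₀).coeff (n+1) ≠ 0) :
    cs.IsLeftDescent w₀ i ∧ (T.repr x w₀).coeff n ≠ 0 := by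
  by_cases hd : cs.IsLeftDescent w₀ i
  · refine ⟨hd, ?_⟩
    rw [aux_reprL_desc cs T hmul hquad hd x, Polynomial.coeff_add, sub_mul, one_mul,
      Polynomial.coeff_sub, aux_coeff_Xmul] at hk
    have z1 : (T.repr x (cs.simple i * w₀)).coeff (n+1) = 0 := by
      by_contra h; have := hx _ _ h; omega
    have z2 : (T.repr x w₀).coeff (n+1) = 0 := by
      by_contra h; have := hx _ _ h; omega
    rw [z1, z2, if_neg (Nat.succ_ne_zero n)] at hk
    simpa using hk
  · exfalso
    rw [aux_reprL_asc cs T hmul hquad hd x, aux_coeff_Xmul,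
      if_neg (Nat.succ_ne_zero n)] at hk
    simp only [Nat.add_sub_cancel] at hk
    have h1 := hx _ _ hk
    have h2 := cs.not_isLeftDescent_iff.mp hd
    omega

lemma aux_keyR
    (hmul : ∀ w w' : W, cs.length (w * w') = cs.length w + cs.length w' →
      T w * T w' = T (w * w'))
    (hquad : ∀ i : B, (T (cs.simple i) + 1) * (T (cs.simple i) - algebraMap (Polynomial ℚ) H X) = 0)
    {i : B} {n : ℕ} {w₀ : W} {x : H}
    (hx : ∀ b k, (T.repr x b).coeff k ≠ 0 → k ≤ n ∧ k + cs.length b ≤ n + cs.length w₀)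
    (hk : (T.repr (x * T (cs.simple i)) w₀).coeff (n+1) ≠ 0) :
    cs.IsRightDescent w₀ i ∧ (T.repr x w₀).coeff n ≠ 0 := by
  by_cases hd : cs.IsRightDescent w₀ i
  · refine ⟨hd, ?_⟩
    rw [aux_reprR_desc cs T hmul hquad hd x, Polynomial.coeff_add, sub_mul, one_mul,
      Polynomial.coeff_sub, aux_coeff_Xmul] at hk
    have z1 : (T.repr x (w₀ * cs.simple i)).coeff (n+1) = 0 := by
      by_contra h; have := hx _ _ h; omega
    have z2 : (T.repr x w₀).coeff (n+1) = 0 := by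
      by_contra h; have := hx _ _ h; omega
    rw [z1, z2, if_neg (Nat.succ_ne_zero n)] at hk
    simpa using hk
  · exfalso
    rw [aux_reprR_asc cs T hmul hquad hd x, aux_coeff_Xmul,
      if_neg (Nat.succ_ne_zero n)] at hk
    simp only [Nat.add_sub_cancel] at hk
    have h1 := hx _ _ hk
    have h2 := cs.not_isRightDescent_iff.mp hd
    omega


lemma aux_T_cons
    (hmul : ∀ w w' : W, cs.length (w * w') = cs.length w + cs.length w' →
      T w * T w' = T (w * w'))
    {i : B} {t : List B} (hr : cs.IsReduced (i :: t)) :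
    T (cs.wordProd (i :: t)) = T (cs.simple i) * T (cs.wordProd t) := by
  rw [cs.wordProd_cons]
  symm
  apply hmul
  have h1 : cs.length (cs.wordProd (i :: t)) = t.length + 1 := by
    rw [hr]; simp
  have h2 : cs.IsReduced t := by simpa using hr.drop 1
  rw [cs.wordProd_cons] at h1
  rw [cs.length_simple, h2]
  omega

lemma aux_T_concat
    (hmul : ∀ w w' : W, cs.length (w * w') = cs.length w + cs.length w' →
      T w * T w' = T (w * w'))
    {i : B} {t : List B} (hr : cs.IsReduced (t ++ [i])) :
    T (cs.wordProd (t ++ [i])) = T (cs.wordProd t) * T (cs.simple i) := by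
  rw [cs.wordProd_append, cs.wordProd_singleton]
  symm
  apply hmul
  have h1 : cs.length (cs.wordProd (t ++ [i])) = t.length + 1 := by
    rw [hr]; simp
  have h2 : cs.IsReduced t := by
    have := hr.take t.length
    simpa [List.take_left] using this
  rw [cs.wordProd_append, cs.wordProd_singleton] at h1
  rw [cs.length_simple, h2]
  omega

lemma aux_inv_left_list
    (hone : T 1 = 1)
    (hmul : ∀ w w' : W, cs.length (w * w') = cs.length w + cs.length w' →
      T w * T w' = T (w * w'))
    (hquad : ∀ i : B, (T (cs.simple i) + 1) * (T (cs.simple i) - algebraMap (Polynomial ℚ) H X) = 0)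
    (w₀ : W) :
    ∀ (t : List B), cs.IsReduced t → ∀ (m : ℕ) (y : H),
    (∀ b k, (T.repr y b).coeff k ≠ 0 → k ≤ m ∧ k + cs.length b ≤ m + cs.length w₀) →
    ∀ b k, (T.repr (T (cs.wordProd t) * y) b).coeff k ≠ 0 →
      k ≤ t.length + m ∧ k + cs.length b ≤ t.length + m + cs.length w₀ := by
  intro t
  induction t with
  | nil =>
    intro _ m y hy b k hk
    rw [cs.wordProd_nil, hone, one_mul] at hk
    simpa using hy b k hk
  | cons i t ih =>
    intro hr m y hy b k hk
    have h2 : cs.IsReduced t := by simpa using hr.drop 1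
    rw [aux_T_cons cs T hmul hr, mul_assoc] at hk
    have := aux_invL cs T hmul hquad (ih h2 m y hy) b k hk
    simp only [List.length_cons]
    omega

lemma aux_inv_right_list
    (hone : T 1 = 1)
    (hmul : ∀ w w' : W, cs.length (w * w') = cs.length w + cs.length w' →
      T w * T w' = T (w * w'))
    (hquad : ∀ i : B, (T (cs.simple i) + 1) * (T (cs.simple i) - algebraMap (Polynomial ℚ) H X) = 0)
    (w₀ : W) :
    ∀ (l : List B), cs.IsReduced l →
    ∀ b k, (T.repr (T w₀ * T (cs.wordProd l)) b).coeff k ≠ 0 →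
      k ≤ l.length ∧ k + cs.length b ≤ l.length + cs.length w₀ := by
  intro l
  induction l using List.reverseRecOn with
  | nil =>
    intro _ b k hk
    rw [cs.wordProd_nil, hone, mul_one] at hk
    simpa using aux_inv_base cs T w₀ b k hk
  | append_singleton t i ih =>
    intro hr b k hk
    have h2 : cs.IsReduced t := by
      have := hr.take t.length
      simpa [List.take_left] using this
    rw [aux_T_concat cs T hmul hr, ← mul_assoc] at hk
    have := aux_invR cs T hmul hquad (ih h2) b k hk
    simp only [List.length_append, List.length_singleton]
    omega

lemma aux_mainL
    (hone : T 1 = 1)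
    (hmul : ∀ w w' : W, cs.length (w * w') = cs.length w + cs.length w' →
      T w * T w' = T (w * w'))
    (hquad : ∀ i : B, (T (cs.simple i) + 1) * (T (cs.simple i) - algebraMap (Polynomial ℚ) H X) = 0)
    (w₀ : W) :
    ∀ (l : List B), cs.IsReduced l → ∀ (m : ℕ) (y : H),
    (∀ b k, (T.repr y b).coeff k ≠ 0 → k ≤ m ∧ k + cs.length b ≤ m + cs.length w₀) →
    (T.repr (T (cs.wordProd l) * y) w₀).coeff (l.length + m) ≠ 0 →
    (∀ i ∈ l, cs.IsLeftDescent w₀ i) ∧ (T.repr y w₀).coeff m ≠ 0 := by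
  intro l
  induction l with
  | nil =>
    intro _ m y _ hk
    rw [cs.wordProd_nil, hone, one_mul] at hk
    exact ⟨by simp, by simpa using hk⟩
  | cons i t ih =>
    intro hr m y hy hk
    have h2 : cs.IsReduced t := by simpa using hr.drop 1
    rw [aux_T_cons cs T hmul hr, mul_assoc] at hk
    rw [show (i :: t).length + m = (t.length + m) + 1 by simp; omega] at hk
    obtain ⟨hd, hk2⟩ := aux_keyL cs T hmul hquad
      (aux_inv_left_list cs T hone hmul hquad w₀ t h2 m y hy) hk
    obtain ⟨ha, hb⟩ := ih h2 m y hy hk2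
    refine ⟨?_, hb⟩
    intro j hj
    rcases List.mem_cons.mp hj with rfl | hj
    · exact hd
    · exact ha j hj

lemma aux_mainR
    (hone : T 1 = 1)
    (hmul : ∀ w w' : W, cs.length (w * w') = cs.length w + cs.length w' →
      T w * T w' = T (w * w'))
    (hquad : ∀ i : B, (T (cs.simple i) + 1) * (T (cs.simple i) - algebraMap (Polynomial ℚ) H X) = 0)
    (w₀ : W) :
    ∀ (l : List B), cs.IsReduced l →
    (T.repr (T w₀ * T (cs.wordProd l)) w₀).coeff l.length ≠ 0 →
    ∀ i ∈ l, cs.IsRightDescent w₀ i := by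
  intro l
  induction l using List.reverseRecOn with
  | nil => simp
  | append_singleton t i ih =>
    intro hr hk j hj
    have h2 : cs.IsReduced t := by
      have := hr.take t.length
      simpa [List.take_left] using this
    rw [aux_T_concat cs T hmul hr, ← mul_assoc] at hk
    rw [show (t ++ [i]).length = t.length + 1 by simp] at hk
    obtain ⟨hd, hk2⟩ := aux_keyR cs T hmul hquad
      (aux_inv_right_list cs T hone hmul hquad w₀ t h2) hk
    rcases List.mem_append.mp hj with hj | hj
    · exact ih h2 hk2 j hj
    · rw [List.mem_singleton.mp hj]
      exact hd

end Aux


/-- if the coefficient of `q^{ℓ(a)+ℓ(a'')}` in `f(a,a',a'',a')` is nonzero,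
then the support of `a` is contained in the left descent set of `a'` and the support of
`a''` is contained in the right descent set of `a'`. -/
theorem hecke_triple_product_diagonal_coeff_ne_zero
    {B W : Type} [Group W] [Finite W] {M : CoxeterMatrix B} (cs : CoxeterSystem M W)
    (H : Type) [Ring H] [Algebra (Polynomial ℚ) H]
    (T : Module.Basis W (Polynomial ℚ) H)
    (hone : T 1 = 1)
    (hmul : ∀ w w' : W, cs.length (w * w') = cs.length w + cs.length w' →
      T w * T w' = T (w * w'))
    (hquad : ∀ i : B, (T (cs.simple i) + 1) * (T (cs.simple i) - algebraMap (Polynomial ℚ) H X) = 0)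
    (a a' a'' : W)
    (h : (T.repr (T a * T a' * T a'') a').coeff (cs.length a + cs.length a'') ≠ 0) :
    (∀ i ∈ cs.support a, cs.IsLeftDescent a' i) ∧
    (∀ i ∈ cs.support a'', cs.IsRightDescent a' i) := by
  constructor
  · intro i hi
    obtain ⟨l, hlr, hlp, hil⟩ := hi
    obtain ⟨l'', hl''r, hl''p⟩ := cs.exists_reduced_word' a''
    have e1 : cs.length a = l.length := by rw [← hlp]; exact hlr
    have e2 : cs.length a'' = l''.length := by rw [hl''p]; exact hl''r
    have h' := h
    rw [e1, e2, ← hlp, hl''p, mul_assoc] at h'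
    obtain ⟨hds, _⟩ := aux_mainL cs T hone hmul hquad a' l hlr l''.length
      (T a' * T (cs.wordProd l''))
      (aux_inv_right_list cs T hone hmul hquad a' l'' hl''r) h'
    exact hds i hil
  · intro i hi
    obtain ⟨l'', hl''r, hl''p, hil⟩ := hi
    obtain ⟨l, hlr, hlp⟩ := cs.exists_reduced_word' a
    have e1 : cs.length a = l.length := by rw [hlp]; exact hlr
    have e2 : cs.length a'' = l''.length := by rw [← hl''p]; exact hl''r
    have h' := h
    rw [e1, e2, hlp, ← hl''p, mul_assoc] at h'
    obtain ⟨_, hc⟩ := aux_mainL cs T hone hmul hquad a' l hlr l''.length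
      (T a' * T (cs.wordProd l''))
      (aux_inv_right_list cs T hone hmul hquad a' l'' hl''r) h'
    exact aux_mainR cs T hone hmul hquad a' l'' hl''r hc i hil
end

section
/- For w, w' in W, let N^{w,w'} ∈ ℤ[q] be the trace of the ℚ(q)-linear map h ↦ T_w h T_{w'}^{-1} on the Iwahori–Hecke algebra H of W. Then, setting n = ℓ(w)+ℓ(w'), the coefficient of q^i in N^{w,w'} vanishes for i > n, and the coefficient of q^n equals the number of elements a' ∈ W such that the support of w is contained in the left descent set of a' and the support of w' is contained in the right descent set of a'; in particular this leading coefficient is positive. -/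
open Polynomial

namespace HeckeAux

section Part1


open List CoxeterSystem

variable {B W : Type} [Group W] [DecidableEq W] {M : CoxeterMatrix B} (cs : CoxeterSystem M W)

local prefix:100 "s" => cs.simple
local prefix:100 "π" => cs.wordProd
local prefix:100 "ℓ" => cs.length

/-- The basic involution on `W × ℤˣ` attached to a simple reflection. -/
def sigmaFun (i : B) : W × ℤˣ → W × ℤˣ :=
  fun p => (s i * p.1 * s i, if p.1 = s i then -p.2 else p.2)

theorem sigmaFun_involutive (i : B) : Function.Involutive (sigmaFun cs i) := by
  rintro ⟨x, e⟩
  unfold sigmaFun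
  dsimp only
  have h1 : s i * (s i * x * s i) * s i = x := by
    group
    simp [cs.simple_sq, mul_assoc]
  have h2 : (s i * x * s i = s i) ↔ (x = s i) := by
    constructor
    · intro h
      have := congrArg (fun y => s i * y * s i) h
      simpa [mul_assoc, cs.simple_mul_simple_cancel_left,
        cs.simple_mul_simple_cancel_right] using this
    · intro h
      rw [h]
      simp [cs.simple_mul_simple_self, cs.simple_mul_simple_cancel_right]
  by_cases h : x = s i
  · simp only [if_pos h, if_pos (h2.mpr h), h1, neg_neg]
  · simp only [if_neg h, if_neg (fun hh => h (h2.mp hh)), h1]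

/-- The permutation of `W × ℤˣ` attached to a simple reflection. -/
def sigma (i : B) : Equiv.Perm (W × ℤˣ) := (sigmaFun_involutive cs i).toPerm

theorem sigma_apply (i : B) (p : W × ℤˣ) :
    sigma cs i p = (s i * p.1 * s i, if p.1 = s i then -p.2 else p.2) := rfl

theorem prod_sigma_apply (ω : List B) (t : W) (ε : ℤˣ) :
    ((ω.map (sigma cs)).prod) (t, ε) =
      (π ω * t * (π ω)⁻¹,
        if Odd ((cs.rightInvSeq ω).count t) then -ε else ε) := by
  induction ω generalizing t ε with
  | nil => simp [rightInvSeq]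
  | cons i ω ih =>
    rw [List.map_cons, List.prod_cons, Equiv.Perm.mul_apply, ih]
    have hris : cs.rightInvSeq (i :: ω) = ((π ω)⁻¹ * (s i) * (π ω)) :: cs.rightInvSeq ω := rfl
    have hcond : (π ω * t * (π ω)⁻¹ = s i) ↔ (t = (π ω)⁻¹ * (s i) * (π ω)) := by
      constructor
      · intro h; rw [← h]; group
      · intro h; rw [h]; group
    rw [sigma_apply, hris, List.count_cons]
    have hw : s i * (π ω * t * (π ω)⁻¹) * s i = π (i :: ω) * t * (π (i :: ω))⁻¹ := by
      rw [cs.wordProd_cons, mul_inv_rev, cs.inv_simple]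
      group
    rw [Prod.mk.injEq]
    refine ⟨hw, ?_⟩
    by_cases hc : t = (π ω)⁻¹ * (s i) * (π ω)
    · have h1 : (π ω * t * (π ω)⁻¹ = s i) := hcond.mpr hc
      have h2 : (if (((π ω)⁻¹ * (s i) * (π ω)) == t) = true then 1 else 0) = 1 := by
        simp only [beq_iff_eq]
        rw [if_pos hc.symm]
      rw [if_pos h1, h2]
      dsimp only
      rcases Nat.even_or_odd ((cs.rightInvSeq ω).count t) with he | ho
      · rw [if_neg (Nat.not_odd_iff_even.mpr he),
          if_pos (by simpa [Nat.odd_add_one, Nat.not_odd_iff_even] using he)]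
      · rw [if_pos ho, if_neg (by simp [Nat.odd_add_one, Nat.not_even_iff_odd.mpr ho]), neg_neg]
    · have h2 : (if (((π ω)⁻¹ * (s i) * (π ω)) == t) = true then 1 else 0) = 0 := by
        simp only [beq_iff_eq]
        rw [if_neg (fun h => hc h.symm)]
      rw [if_neg (fun h => hc (hcond.mp h)), h2, Nat.add_zero]


/-! ### Alternating words -/

theorem alt_drop (i i' : B) : ∀ (j n : ℕ), (CoxeterSystem.alternatingWord i i' n).drop j
    = CoxeterSystem.alternatingWord i i' (n - j) := by
  intro j
  induction j with
  | zero => simp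
  | succ j ih =>
    intro n
    have hdd : (CoxeterSystem.alternatingWord i i' n).drop (j+1)
        = ((CoxeterSystem.alternatingWord i i' n).drop 1).drop j := by
      rw [List.drop_drop, Nat.add_comm]
    rw [hdd]
    cases n with
    | zero => simp [CoxeterSystem.alternatingWord]
    | succ n =>
      rw [CoxeterSystem.alternatingWord_succ' i i' n]
      simp only [List.drop_succ_cons, List.drop_zero]
      rw [ih n]
      congr 1
      omega

theorem alt_get? (i i' : B) (n k : ℕ) (hk : k < n) :
    (CoxeterSystem.alternatingWord i i' n)[k]?
      = some (if Even (n - k - 1) then i' else i) := by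
  have h1 : (CoxeterSystem.alternatingWord i i' n)[k]?
      = ((CoxeterSystem.alternatingWord i i' n).drop k)[0]? := by
    rw [List.getElem?_drop, Nat.add_zero]
  rw [h1, alt_drop]
  have h2 : n - k = (n - k - 1) + 1 := by omega
  rw [h2, CoxeterSystem.alternatingWord_succ']
  rfl

theorem alt_append (i i' : B) (p : ℕ) : ∀ q : ℕ,
    CoxeterSystem.alternatingWord i i' (p + q)
      = CoxeterSystem.alternatingWord (if Even p then i else i') (if Even p then i' else i) q
          ++ CoxeterSystem.alternatingWord i i' p := by
  intro q
  induction q with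
  | zero => simp [CoxeterSystem.alternatingWord]
  | succ q ih =>
    have h1 : p + (q + 1) = (p + q) + 1 := by omega
    rw [h1, CoxeterSystem.alternatingWord_succ', ih, CoxeterSystem.alternatingWord_succ']
    rw [List.cons_append]
    congr 1
    by_cases hp : Even p <;> by_cases hq : Even q
    · have c1 : Even (p + q) := by simp only [Nat.even_iff] at hp hq ⊢; omega
      rw [if_pos c1, if_pos hq, if_pos hp]
    · have c1 : ¬ Even (p + q) := by simp only [Nat.even_iff] at hp hq ⊢; omega
      rw [if_neg c1, if_neg hq, if_pos hp]
    · have c1 : ¬ Even (p + q) := by simp only [Nat.even_iff] at hp hq ⊢; omega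
      rw [if_neg c1, if_pos hq, if_neg hp]
    · have c1 : Even (p + q) := by simp only [Nat.even_iff] at hp hq ⊢; omega
      rw [if_pos c1, if_neg hq, if_neg hp]

/-- Key pairing: the first half of the right inversion sequence of the full alternating
word (of length `2 * M i i'`) agrees with the right inversion sequence of the half word. -/
theorem ris_alt_pairing (i i' : B) (m k : ℕ) (hm : M i i' = m) (hm1 : 1 ≤ m) (hk : k < m) :
    (cs.rightInvSeq (CoxeterSystem.alternatingWord i i' (2*m))).getD k 1
      = (cs.rightInvSeq (CoxeterSystem.alternatingWord i i' m)).getD k 1 := by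
  obtain ⟨p, hp⟩ : ∃ p, m = k + p + 1 := ⟨m - k - 1, by omega⟩
  set e : B := if Even p then i' else i with he
  set a : B := if Even p then i else i' with ha
  rw [CoxeterSystem.getD_rightInvSeq, CoxeterSystem.getD_rightInvSeq]
  have hd1 : (CoxeterSystem.alternatingWord i i' (2*m)).drop (k+1)
      = CoxeterSystem.alternatingWord i i' (p + m) := by
    rw [alt_drop]; congr 1; omega
  have hd2 : (CoxeterSystem.alternatingWord i i' m).drop (k+1)
      = CoxeterSystem.alternatingWord i i' p := by
    rw [alt_drop]; congr 1; omega
  have hg1 : (CoxeterSystem.alternatingWord i i' (2*m))[k]?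
      = some (if Even m then e else a) := by
    rw [alt_get? i i' _ k (by omega)]
    congr 1
    have h2 : 2*m - k - 1 = k + 2*p + 1 := by omega
    rw [h2, hp]
    by_cases hkk : Even k <;> by_cases hpp : Even p
    · have c1 : ¬ Even (k + 2*p + 1) := by simp only [Nat.even_iff] at hkk ⊢; omega
      have c2 : ¬ Even (k + p + 1) := by simp only [Nat.even_iff] at hkk hpp ⊢; omega
      rw [if_neg c1, if_neg c2, ha, if_pos hpp]
    · have c1 : ¬ Even (k + 2*p + 1) := by simp only [Nat.even_iff] at hkk ⊢; omega
      have c2 : Even (k + p + 1) := by simp only [Nat.even_iff] at hkk hpp ⊢; omega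
      rw [if_neg c1, if_pos c2, he, if_neg hpp]
    · have c1 : Even (k + 2*p + 1) := by simp only [Nat.even_iff] at hkk ⊢; omega
      have c2 : Even (k + p + 1) := by simp only [Nat.even_iff] at hkk hpp ⊢; omega
      rw [if_pos c1, if_pos c2, he, if_pos hpp]
    · have c1 : Even (k + 2*p + 1) := by simp only [Nat.even_iff] at hkk ⊢; omega
      have c2 : ¬ Even (k + p + 1) := by simp only [Nat.even_iff] at hkk hpp ⊢; omega
      rw [if_pos c1, if_neg c2, ha, if_neg hpp]
  have hg2 : (CoxeterSystem.alternatingWord i i' m)[k]?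
      = some e := by
    rw [alt_get? i i' _ k (by omega)]
    congr 1
    have h2 : m - k - 1 = p := by omega
    rw [h2]
  have hsplit : CoxeterSystem.alternatingWord i i' (p + m)
      = CoxeterSystem.alternatingWord a e m ++ CoxeterSystem.alternatingWord i i' p := by
    rw [alt_append i i' p m]
  have hMae : M a e = m := by
    rcases Nat.even_or_odd p with hpp | hpp
    · simp only [he, ha, if_pos hpp]; exact hm
    · simp only [he, ha, if_neg (Nat.not_even_iff_odd.mpr hpp)]
      rw [M.symmetric]; exact hm
  have hkey : π (CoxeterSystem.alternatingWord a e (m+1))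
      = π (CoxeterSystem.alternatingWord e a (m-1)) := by
    have h5 := cs.prod_alternatingWord_eq_prod_alternatingWord_sub a e (m+1)
      (by rw [hMae]; omega)
    rw [h5]
    congr 2
    rw [hMae]
    omega
  have hY : (π (CoxeterSystem.alternatingWord a e m))⁻¹
        * (s (if Even m then e else a)) * π (CoxeterSystem.alternatingWord a e m) = s e := by
    have h6 : s (if Even m then e else a) * π (CoxeterSystem.alternatingWord a e m)
        = π (CoxeterSystem.alternatingWord a e (m+1)) := by
      rw [CoxeterSystem.alternatingWord_succ', cs.wordProd_cons]
    have h7 : π (CoxeterSystem.alternatingWord e a (m-1)) * s e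
        = π (CoxeterSystem.alternatingWord a e m) := by
      have h8 : CoxeterSystem.alternatingWord a e m
          = (CoxeterSystem.alternatingWord e a (m-1)).concat e := by
        have hm' : m = (m-1) + 1 := by omega
        nth_rw 1 [hm']
        rw [CoxeterSystem.alternatingWord_succ]
      rw [h8, cs.wordProd_concat]
    rw [mul_assoc, h6, hkey, ← h7]
    group
    simp [cs.simple_sq]
  rw [hd1, hd2, hg1, hg2, hsplit, cs.wordProd_append]
  simp only [Option.map_some, Option.getD_some]
  calc (π (CoxeterSystem.alternatingWord a e m) * π (CoxeterSystem.alternatingWord i i' p))⁻¹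
        * s (if Even m then e else a)
        * (π (CoxeterSystem.alternatingWord a e m) * π (CoxeterSystem.alternatingWord i i' p))
      = (π (CoxeterSystem.alternatingWord i i' p))⁻¹
        * ((π (CoxeterSystem.alternatingWord a e m))⁻¹
            * (s (if Even m then e else a)) * π (CoxeterSystem.alternatingWord a e m))
        * π (CoxeterSystem.alternatingWord i i' p) := by group
    _ = (π (CoxeterSystem.alternatingWord i i' p))⁻¹ * s e
          * π (CoxeterSystem.alternatingWord i i' p) := by rw [hY]



theorem count_ris_alt_even (i i' : B) (hm1 : 1 ≤ M i i') (t : W) :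
    Even ((cs.rightInvSeq (CoxeterSystem.alternatingWord i i' (2 * M i i'))).count t) := by
  set m := M i i' with hmdef
  set Ω := CoxeterSystem.alternatingWord i i' (2*m) with hΩ
  have hlen : (cs.rightInvSeq Ω).length = 2*m := by
    rw [cs.length_rightInvSeq, hΩ, CoxeterSystem.length_alternatingWord]
  have hdropword : Ω.drop m = CoxeterSystem.alternatingWord i i' m := by
    rw [hΩ, alt_drop]
    congr 1
    omega
  have hdrop : (cs.rightInvSeq Ω).drop m = cs.rightInvSeq (CoxeterSystem.alternatingWord i i' m) := by
    rw [← cs.rightInvSeq_drop, hdropword]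
  have htake : (cs.rightInvSeq Ω).take m = cs.rightInvSeq (CoxeterSystem.alternatingWord i i' m) := by
    apply List.ext_getElem
    · simp [hlen, cs.length_rightInvSeq]
      omega
    · intro k h1 h2
      have hk : k < m := by
        simp only [List.length_take, hlen] at h1
        omega
      have e1 : ((cs.rightInvSeq Ω).take m)[k] = (cs.rightInvSeq Ω)[k]'(by omega) := by
        rw [List.getElem_take]
      rw [e1, ← List.getD_eq_getElem _ 1, ← List.getD_eq_getElem _ 1]
      exact ris_alt_pairing cs i i' m k rfl hm1 hk
  have hsum : (cs.rightInvSeq Ω).count t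
      = (cs.rightInvSeq (CoxeterSystem.alternatingWord i i' m)).count t
        + (cs.rightInvSeq (CoxeterSystem.alternatingWord i i' m)).count t := by
    conv_lhs => rw [← List.take_append_drop m (cs.rightInvSeq Ω)]
    rw [List.count_append, htake, hdrop]
  rw [hsum]
  exact ⟨_, rfl⟩

theorem sigma_liftable : M.IsLiftable (sigma cs) := by
  intro i i'
  rcases Nat.eq_zero_or_pos (M i i') with h0 | hpos
  · rw [h0, pow_zero]
  · have hrep : ∀ q : ℕ, (sigma cs i * sigma cs i') ^ q
        = ((CoxeterSystem.alternatingWord i i' (2*q)).map (sigma cs)).prod := by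
      intro q
      induction q with
      | zero => simp [CoxeterSystem.alternatingWord]
      | succ q ih =>
        have hw : CoxeterSystem.alternatingWord i i' (2*(q+1))
            = i :: i' :: CoxeterSystem.alternatingWord i i' (2*q) := by
          have h1 : 2*(q+1) = (2*q+1)+1 := by omega
          rw [h1, CoxeterSystem.alternatingWord_succ', CoxeterSystem.alternatingWord_succ']
          have c1 : ¬ Even (2*q+1) := by simp only [Nat.even_iff]; omega
          have c2 : Even (2*q) := by simp only [Nat.even_iff]; omega
          rw [if_neg c1, if_pos c2]
        rw [hw, List.map_cons, List.map_cons, List.prod_cons, List.prod_cons, ← ih, pow_succ',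
          mul_assoc]
    apply Equiv.ext
    rintro ⟨t, ε⟩
    rw [hrep (M i i'), prod_sigma_apply]
    have hπ : cs.wordProd (CoxeterSystem.alternatingWord i i' (2 * M i i')) = 1 := by
      rw [cs.prod_alternatingWord_eq_mul_pow]
      have c1 : Even (2 * M i i') := by simp only [Nat.even_iff]; omega
      have c2 : 2 * M i i' / 2 = M i i' := by omega
      rw [if_pos c1, c2, one_mul, cs.simple_mul_simple_pow]
    rw [hπ]
    have hcount := count_ris_alt_even cs i i' hpos t
    rw [if_neg (Nat.not_odd_iff_even.mpr hcount)]
    simp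

/-- The sign homomorphism `W →* Perm (W × ℤˣ)`. -/
noncomputable def phi : W →* Equiv.Perm (W × ℤˣ) := cs.lift ⟨sigma cs, sigma_liftable cs⟩

theorem phi_simple (i : B) : phi cs (s i) = sigma cs i := cs.lift_apply_simple (sigma_liftable cs) i

theorem phi_wordProd (ω : List B) : phi cs (π ω) = ((ω.map (sigma cs)).prod) := by
  induction ω with
  | nil => simp [phi]
  | cons i ω ih =>
    rw [cs.wordProd_cons, map_mul, phi_simple, ih, List.map_cons, List.prod_cons]

theorem phi_apply_word (ω : List B) (t : W) (ε : ℤˣ) :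
    phi cs (π ω) (t, ε) = (π ω * t * (π ω)⁻¹,
      if Odd ((cs.rightInvSeq ω).count t) then -ε else ε) := by
  rw [phi_wordProd, prod_sigma_apply]



/-! ### The sign cocycle and strong exchange -/

/-- The sign `η(w, t)`. -/
noncomputable def sgn (w t : W) : ℤˣ := (phi cs w (t, 1)).2

theorem phi_apply' (w t : W) (ε : ℤˣ) :
    phi cs w (t, ε) = (w * t * w⁻¹, ε * sgn cs w t) := by
  obtain ⟨ω, rfl⟩ := cs.wordProd_surjective w
  rw [phi_apply_word, sgn, phi_apply_word]
  by_cases h : Odd ((cs.rightInvSeq ω).count t)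
  · rw [if_pos h, if_pos h]
    simp
  · rw [if_neg h, if_neg h]
    simp

theorem sgn_word (ω : List B) (t : W) :
    sgn cs (π ω) t = if Odd ((cs.rightInvSeq ω).count t) then -1 else 1 := by
  rw [sgn, phi_apply_word]

theorem sgn_mul (u v t : W) :
    sgn cs (u * v) t = sgn cs v t * sgn cs u (v * t * v⁻¹) := by
  have h1 : phi cs (u * v) (t, 1) = phi cs u (phi cs v (t, 1)) := by
    rw [map_mul]
    rfl
  have h2 : phi cs u (phi cs v (t, 1)) =
      (u * (v * t * v⁻¹) * u⁻¹, sgn cs v t * sgn cs u (v * t * v⁻¹)) := by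
    rw [phi_apply' cs v t 1, one_mul, phi_apply']
  rw [sgn, h1, h2]

theorem sgn_one (t : W) : sgn cs 1 t = 1 := by
  rw [sgn, map_one]
  rfl

theorem sgn_simple_self (i : B) : sgn cs (s i) (s i) = -1 := by
  rw [sgn, phi_simple, sigma_apply]
  simp

theorem sgn_sq (w t : W) : sgn cs w t * sgn cs w t = 1 := by
  rcases Int.units_eq_one_or (sgn cs w t) with h | h <;> rw [h] <;> decide

theorem sgn_refl_self (t : W) (ht : cs.IsReflection t) : sgn cs t t = -1 := by
  obtain ⟨v, i, rfl⟩ := ht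
  set x := sgn cs v (s i) with hx
  set t := v * s i * v⁻¹ with hts
  have h0 : (1 : ℤˣ) = x * sgn cs v⁻¹ t := by
    have h := sgn_mul cs v⁻¹ v (s i)
    rw [inv_mul_cancel, sgn_one] at h
    rw [h, hts, hx]
  have hinv : sgn cs v⁻¹ t = x := by
    have h1 : x * (x * sgn cs v⁻¹ t) = sgn cs v⁻¹ t := by
      rw [← mul_assoc, hx, sgn_sq, one_mul]
    rw [← h0, mul_one] at h1
    exact h1.symm
  have hdec : sgn cs t t = sgn cs (s i * v⁻¹) t * sgn cs v ((s i * v⁻¹) * t * (s i * v⁻¹)⁻¹) := by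
    have hsplit : t = v * (s i * v⁻¹) := by rw [hts]; group
    nth_rw 1 [hsplit]
    exact sgn_mul ..
  have hc1 : (s i * v⁻¹) * t * (s i * v⁻¹)⁻¹ = s i := by rw [hts]; group
  have hc2 : v⁻¹ * t * (v⁻¹)⁻¹ = s i := by rw [hts]; group
  have hdec2 : sgn cs (s i * v⁻¹) t = sgn cs v⁻¹ t * sgn cs (s i) (v⁻¹ * t * (v⁻¹)⁻¹) :=
    sgn_mul ..
  rw [hdec, hc1, hdec2, hc2, hinv, sgn_simple_self, ← hx]
  calc x * -1 * x = -(x * x) := by rw [mul_neg_one, neg_mul]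
    _ = -1 := by rw [hx, sgn_sq]

theorem sgn_eq_neg_sgn_mul_refl (w t : W) (ht : cs.IsReflection t) :
    sgn cs w t = - sgn cs (w * t) t := by
  have hdec : sgn cs w t = sgn cs ((w * t) * t) t := by
    rw [mul_assoc, ht.mul_self, mul_one]
  have hc : t * t * t⁻¹ = t := by group
  rw [hdec, sgn_mul, hc, sgn_refl_self cs t ht, neg_one_mul]

theorem sgn_neg_of_inversion (w t : W) (ht : cs.IsReflection t) (hlt : ℓ (w * t) < ℓ w) :
    sgn cs w t = -1 := by
  rw [sgn_eq_neg_sgn_mul_refl cs w t ht]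
  rcases Int.units_eq_one_or (sgn cs (w * t) t) with h | h
  · rw [h]
  · exfalso
    obtain ⟨α, hαred, hαw⟩ := cs.exists_reduced_word' (w * t)
    rw [hαw, sgn_word] at h
    have hodd : Odd ((cs.rightInvSeq α).count t) := by
      by_contra hodd
      rw [if_neg hodd] at h
      exact absurd h (by decide)
    have hmem : t ∈ cs.rightInvSeq α := by
      have : 0 < (cs.rightInvSeq α).count t := by
        rcases Nat.eq_zero_or_pos ((cs.rightInvSeq α).count t) with h' | h'
        · rw [h'] at hodd
          exact absurd hodd (by simp)
        · exact h'
      exact List.count_pos_iff.mp this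
    obtain ⟨j, hj, hget⟩ := List.mem_iff_getElem.mp hmem
    have hgd : (cs.rightInvSeq α).getD j 1 = t := by
      rw [List.getD_eq_getElem _ 1 hj, hget]
    have herase : π α * t = π (α.eraseIdx j) := by
      rw [← hgd]
      exact cs.wordProd_mul_getD_rightInvSeq α j
    have hlen : (α.eraseIdx j).length = α.length - 1 := by
      rw [List.length_eraseIdx]
      rw [cs.length_rightInvSeq] at hj
      simp [hj]
    have hww : w = π (α.eraseIdx j) := by
      rw [← herase, ← hαw, mul_assoc, ht.mul_self, mul_one]
    have h1 : ℓ w ≤ α.length - 1 := by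
      rw [hww, ← hlen]
      exact cs.length_wordProd_le _
    have h2 : α.length = ℓ (w * t) := by
      rw [hαw]
      exact hαred.symm
    omega

theorem mem_rightInvSeq_of_inversion {ω : List B} (hred : cs.IsReduced ω) {t : W}
    (ht : cs.IsReflection t) (hlt : ℓ (π ω * t) < ℓ (π ω)) : t ∈ cs.rightInvSeq ω := by
  have h := sgn_neg_of_inversion cs (π ω) t ht hlt
  rw [sgn_word] at h
  by_cases hodd : Odd ((cs.rightInvSeq ω).count t)
  · have : 0 < (cs.rightInvSeq ω).count t := by
      rcases Nat.eq_zero_or_pos ((cs.rightInvSeq ω).count t) with h' | h'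
      · rw [h'] at hodd
        exact absurd hodd (by simp)
      · exact h'
    exact List.count_pos_iff.mp this
  · rw [if_neg hodd] at h
    exact absurd h (by decide)

/-- Left exchange property. -/
theorem left_exchange' {ω : List B} (hred : cs.IsReduced ω) {j : B}
    (hlt : ℓ (s j * π ω) < ℓ (π ω)) :
    ∃ k < ω.length, s j * π ω = π (ω.eraseIdx k) := by
  have hrev : cs.IsReduced ω.reverse := (cs.isReduced_reverse_iff ω).mpr hred
  have hlen : ℓ ((π ω.reverse) * s j) < ℓ (π ω.reverse) := by
    rw [cs.wordProd_reverse]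
    have h1 : (π ω)⁻¹ * s j = (s j * π ω)⁻¹ := by
      rw [mul_inv_rev, cs.inv_simple]
    rw [h1, cs.length_inv, cs.length_inv]
    exact hlt
  have hmem : s j ∈ cs.rightInvSeq ω.reverse :=
    mem_rightInvSeq_of_inversion cs hrev (cs.isReflection_simple j) hlen
  rw [cs.rightInvSeq_reverse, List.mem_reverse] at hmem
  obtain ⟨k, hk, hget⟩ := List.mem_iff_getElem.mp hmem
  rw [cs.length_leftInvSeq] at hk
  refine ⟨k, hk, ?_⟩
  have hgd : (cs.leftInvSeq ω).getD k 1 = s j := by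
    rw [List.getD_eq_getElem _ 1 (by rw [cs.length_leftInvSeq]; exact hk), hget]
  rw [← hgd]
  exact cs.getD_leftInvSeq_mul_wordProd ω k


/-- Any word can be shrunk to a reduced word for the same element using only its own letters. -/
theorem delete_to_reduced : ∀ (n : ℕ) (μ : List B), μ.length = n →
    ∃ ν : List B, cs.IsReduced ν ∧ π ν = π μ ∧ ∀ x ∈ ν, x ∈ μ := by
  intro n
  induction n using Nat.strong_induction_on with
  | _ n ih =>
    intro μ hn
    by_cases hred : cs.IsReduced μ
    · exact ⟨μ, hred, rfl, fun x hx => hx⟩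
    · haveI : DecidablePred (fun r => ¬ cs.IsReduced (μ.take r)) := fun _ => Classical.dec _
      have hex : ∃ r, ¬ cs.IsReduced (μ.take r) := ⟨μ.length, by rwa [List.take_length]⟩
      set r₀ := Nat.find hex with hr₀
      have hr₀prop : ¬ cs.IsReduced (μ.take r₀) := Nat.find_spec hex
      have hr₀pos : 0 < r₀ := by
        rcases Nat.eq_zero_or_pos r₀ with h | h
        · exfalso
          apply hr₀prop
          rw [h]
          simp [CoxeterSystem.IsReduced]
        · exact h
      have hr₀le : r₀ ≤ μ.length := Nat.find_le (by rwa [List.take_length])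
      set r := r₀ - 1 with hrdef
      have hrlt : r < μ.length := by omega
      have hrred : cs.IsReduced (μ.take r) := by
        have := Nat.find_min hex (show r < r₀ by omega)
        rwa [not_not] at this
      have hsucc : μ.take (r + 1) = μ.take r ++ [μ[r]'hrlt] := by
        rw [List.take_succ]
        simp [List.getElem?_eq_getElem hrlt]
      have hr₀r : r₀ = r + 1 := by omega
      have htr : (μ.take r).length = r := by
        rw [List.length_take]
        omega
      have hlu : ℓ (π (μ.take r)) = r := by
        rw [hrred]
        exact htr
      have hlv : ℓ (π (μ.take r) * s (μ[r]'hrlt)) < ℓ (π (μ.take r)) := by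
        have hne : ℓ (π (μ.take r) * s (μ[r]'hrlt)) ≠ ℓ (π (μ.take r)) + 1 := by
          intro hcon
          apply hr₀prop
          rw [hr₀r]
          unfold CoxeterSystem.IsReduced
          rw [hsucc, cs.wordProd_append, cs.wordProd_singleton, List.length_append, htr]
          rw [hcon, hlu]
          rfl
        rcases cs.length_mul_simple (π (μ.take r)) (μ[r]'hrlt) with h | h
        · exact absurd h hne
        · omega
      have hmem : s (μ[r]'hrlt) ∈ cs.rightInvSeq (μ.take r) :=
        mem_rightInvSeq_of_inversion cs hrred (cs.isReflection_simple _) hlv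
      obtain ⟨k, hk, hget⟩ := List.mem_iff_getElem.mp hmem
      rw [cs.length_rightInvSeq] at hk
      have herase : π (μ.take r) * s (μ[r]'hrlt) = π ((μ.take r).eraseIdx k) := by
        rw [← cs.wordProd_mul_getD_rightInvSeq (μ.take r) k]
        congr 1
        rw [List.getD_eq_getElem _ 1 (by rw [cs.length_rightInvSeq]; exact hk), hget]
      have hprod : π (((μ.take r).eraseIdx k) ++ μ.drop (r + 1)) = π μ := by
        rw [cs.wordProd_append, ← herase]
        conv_rhs => rw [← List.take_append_drop (r+1) μ]
        rw [cs.wordProd_append, hsucc, cs.wordProd_append, cs.wordProd_singleton, mul_assoc]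
      have hklt : k < (μ.take r).length := hk
      have hlen₂ : (((μ.take r).eraseIdx k) ++ μ.drop (r + 1)).length < n := by
        rw [List.length_append, List.length_drop]
        have h5 := List.length_eraseIdx_add_one hklt
        omega
      obtain ⟨ν, hν1, hν2, hν3⟩ := ih _ hlen₂ (((μ.take r).eraseIdx k) ++ μ.drop (r + 1)) rfl
      refine ⟨ν, hν1, by rw [hν2, hprod], ?_⟩
      intro x hx
      have hx2 := hν3 x hx
      rcases List.mem_append.mp hx2 with h | h
      · exact (List.take_sublist r μ).subset ((List.eraseIdx_sublist _ k).subset h)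
      · exact (List.drop_sublist (r+1) μ).subset h

/-- Letters of any reduced word are (up to equality of simple reflections) letters of any
other reduced word of the same element. -/
theorem support_letters : ∀ (n : ℕ) (w : W), ℓ w = n →
    ∀ (l l' : List B), cs.IsReduced l → π l = w → cs.IsReduced l' → π l' = w →
    ∀ j ∈ l', ∃ j'' ∈ l, s j'' = s j := by
  intro n
  induction n using Nat.strong_induction_on with
  | _ n ih =>
    intro w hn l l' hl hlw hl' hl'w j₂ hj₂
    match l' with
    | [] => exact absurd hj₂ List.not_mem_nil
    | j :: t' =>
      have ht'red : cs.IsReduced t' := CoxeterSystem.IsReduced.drop (ω := j :: t') hl' 1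
      have hsw : s j * w = π t' := by
        rw [← hl'w, cs.wordProd_cons, ← mul_assoc, cs.simple_mul_simple_self, one_mul]
      have hlw1 : ℓ w = t'.length + 1 := by
        rw [← hl'w, hl']
        simp
      have hlsw : ℓ (s j * w) = t'.length := by
        rw [hsw, ht'red]
      have hlt : ℓ (s j * w) < ℓ w := by omega
      have hπl : π l = w := hlw
      obtain ⟨k, hk, hex⟩ := left_exchange' cs hl (by rw [hπl]; exact hlt)
      rw [hπl] at hex
      have hllen : l.length = n := by rw [← hn, ← hlw, hl]
      have herlen : (l.eraseIdx k).length = t'.length := by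
        have := List.length_eraseIdx_add_one hk
        omega
      have hered : cs.IsReduced (l.eraseIdx k) := by
        unfold CoxeterSystem.IsReduced
        rw [← hex, herlen, ← hlsw]
      rcases List.mem_cons.mp hj₂ with rfl | hmem
      · -- j itself
        have hsj : s j₂ = π (l ++ (l.eraseIdx k).reverse) := by
          rw [cs.wordProd_append, cs.wordProd_reverse, ← hex, hπl]
          rw [mul_inv_rev, cs.inv_simple, ← mul_assoc, mul_inv_cancel, one_mul]
        obtain ⟨ν, hν1, hν2, hν3⟩ := delete_to_reduced cs _ (l ++ (l.eraseIdx k).reverse) rfl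
        have hν2' : π ν = s j₂ := by rw [hν2, ← hsj]
        have hνlen : ν.length = 1 := by
          rw [← hν1, hν2', cs.length_simple]
        obtain ⟨j', hj'⟩ := List.length_eq_one_iff.mp hνlen
        have hj'mem : j' ∈ l := by
          have := hν3 j' (by rw [hj']; exact List.mem_singleton_self j')
          rcases List.mem_append.mp this with h | h
          · exact h
          · exact (List.eraseIdx_sublist _ k).subset (List.mem_reverse.mp h)
        refine ⟨j', hj'mem, ?_⟩
        rw [← cs.wordProd_singleton, ← hj', hν2']
      · -- j₂ ∈ t'
        have hlswn : ℓ (s j * w) < n := by omega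
        obtain ⟨j'', hj''1, hj''2⟩ := ih _ hlswn (s j * w) rfl (l.eraseIdx k) t' hered
          hex.symm ht'red hsw.symm j₂ hmem
        exact ⟨j'', (List.eraseIdx_sublist _ k).subset hj''1, hj''2⟩



/-- Alias for the support definition in the main file. -/
def supp (w : W) : Set B := CoxeterSystem.support cs w

theorem left_descent_iff_support (l : List B) (hred : cs.IsReduced l) (a : W) :
    (∀ i ∈ supp cs (π l), cs.IsLeftDescent a i) ↔ (∀ i ∈ l, cs.IsLeftDescent a i) := by
  constructor
  · intro h i hi
    exact h i ⟨l, hred, rfl, hi⟩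
  · intro h i hi
    obtain ⟨l', h1, h2, h3⟩ := hi
    obtain ⟨j'', hm, he⟩ := support_letters cs (ℓ (π l)) (π l) rfl l l' hred rfl h1 h2 i h3
    have hthis : ℓ (s j'' * a) < ℓ a := h j'' hm
    rwa [he] at hthis

theorem right_descent_iff_support (l : List B) (hred : cs.IsReduced l) (a : W) :
    (∀ i ∈ supp cs (π l), cs.IsRightDescent a i) ↔ (∀ i ∈ l, cs.IsRightDescent a i) := by
  constructor
  · intro h i hi
    exact h i ⟨l, hred, rfl, hi⟩
  · intro h i hi
    obtain ⟨l', h1, h2, h3⟩ := hi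
    obtain ⟨j'', hm, he⟩ := support_letters cs (ℓ (π l)) (π l) rfl l l' hred rfl h1 h2 i h3
    have hthis : ℓ (a * s j'') < ℓ a := h j'' hm
    rwa [he] at hthis



end Part1

section Part2

variable {B W : Type} [Group W] [DecidableEq W] [Fintype W] {M : CoxeterMatrix B} (cs : CoxeterSystem M W)

local prefix:100 "s" => cs.simple
local prefix:100 "π" => cs.wordProd
local prefix:100 "ℓ" => cs.length

noncomputable instance decidableLeftDescent (a : W) (i : B) : Decidable (cs.IsLeftDescent a i) := by
  unfold CoxeterSystem.IsLeftDescent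
  infer_instance

noncomputable instance decidableRightDescent (a : W) (i : B) : Decidable (cs.IsRightDescent a i) := by
  unfold CoxeterSystem.IsRightDescent
  infer_instance

/-- Matrix (over `ℚ[X]`) of left multiplication by `T_{s_i}` in the `T`-basis. -/
noncomputable def LM (i : B) : Matrix W W (Polynomial ℚ) :=
  Matrix.of fun b a => if cs.IsLeftDescent a i then
      (if b = cs.simple i * a then (X : ℚ[X]) else if b = a then X - 1 else 0)
    else (if b = cs.simple i * a then 1 else 0)

/-- Matrix (over `ℚ[X]`) of right multiplication by `T_{s_i}` in the `T`-basis. -/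
noncomputable def RM (i : B) : Matrix W W (Polynomial ℚ) :=
  Matrix.of fun b a => if cs.IsRightDescent a i then
      (if b = a * cs.simple i then (X : ℚ[X]) else if b = a then X - 1 else 0)
    else (if b = a * cs.simple i then 1 else 0)

theorem LM_degree_le (i : B) (b a : W) : ((LM cs i) b a).degree ≤ 1 := by
  unfold LM
  simp only [Matrix.of_apply]
  split_ifs
  · exact degree_X_le
  · calc (X - 1 : ℚ[X]).degree ≤ max (X : ℚ[X]).degree (1 : ℚ[X]).degree := degree_sub_le _ _
      _ ≤ 1 := by
          apply max_le degree_X_le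
          exact le_trans degree_one_le (by norm_num)
  · simp
  · exact le_trans degree_one_le (by norm_num)
  · simp

theorem RM_degree_le (i : B) (b a : W) : ((RM cs i) b a).degree ≤ 1 := by
  unfold RM
  simp only [Matrix.of_apply]
  split_ifs
  · exact degree_X_le
  · calc (X - 1 : ℚ[X]).degree ≤ max (X : ℚ[X]).degree (1 : ℚ[X]).degree := degree_sub_le _ _
      _ ≤ 1 := by
          apply max_le degree_X_le
          exact le_trans degree_one_le (by norm_num)
  · simp
  · exact le_trans degree_one_le (by norm_num)
  · simp

theorem coeff_mul_top {p r : Polynomial ℚ} {n : ℕ} (hp : p.degree ≤ 1)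
    (hr : r.degree ≤ (n : WithBot ℕ)) : (p * r).coeff (n + 1) = p.coeff 1 * r.coeff n := by
  rw [coeff_mul]
  rw [Finset.sum_eq_single ((1 : ℕ), n)]
  · intro x hx hne
    rcases x with ⟨u, v⟩
    rw [Finset.HasAntidiagonal.mem_antidiagonal] at hx
    rcases Nat.lt_or_ge u 2 with hu | hu
    · interval_cases u
      · have hv : v = n + 1 := by omega
        subst hv
        have : r.coeff (n+1) = 0 := coeff_eq_zero_of_degree_lt (lt_of_le_of_lt hr (by
          exact_mod_cast Nat.lt_succ_self n))
        simp [this]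
      · exfalso
        apply hne
        have : v = n := by omega
        simp [this]
    · have : p.coeff u = 0 := coeff_eq_zero_of_degree_lt (lt_of_le_of_lt hp (by
        exact_mod_cast hu))
      simp [this]
  · intro h
    exfalso
    apply h
    rw [Finset.HasAntidiagonal.mem_antidiagonal]
    omega

theorem prod_degree_coeff : ∀ (Ms : List (Matrix W W (Polynomial ℚ))),
    (∀ A ∈ Ms, ∀ b a, (A b a).degree ≤ 1) →
    (∀ b a, ((Ms.prod) b a).degree ≤ (Ms.length : WithBot ℕ)) ∧
    (∀ b a, ((Ms.prod) b a).coeff Ms.length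
      = ((Ms.map (fun (A : Matrix W W ℚ[X]) => A.map (fun p => p.coeff 1))).prod) b a) := by
  intro Ms
  induction Ms with
  | nil =>
    intro _
    constructor
    · intro b a
      rw [List.prod_nil, Matrix.one_apply]
      split_ifs
      · exact le_trans degree_one_le (by norm_num)
      · simp
    · intro b a
      rw [List.prod_nil, List.map_nil, List.prod_nil, Matrix.one_apply, Matrix.one_apply]
      split_ifs <;> simp
  | cons A Ms ih =>
    intro hdeg
    have hA : ∀ b a, (A b a).degree ≤ 1 := hdeg A List.mem_cons_self
    obtain ⟨ih1, ih2⟩ := ih (fun A' hA' => hdeg A' (List.mem_cons_of_mem A hA'))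
    constructor
    · intro b a
      rw [List.prod_cons, Matrix.mul_apply]
      apply le_trans (degree_sum_le _ _)
      apply Finset.sup_le
      intro c _
      rw [degree_mul]
      calc (A b c).degree + ((Ms.prod) c a).degree ≤ 1 + (Ms.length : WithBot ℕ) :=
            add_le_add (hA b c) (ih1 c a)
        _ = ((A :: Ms).length : WithBot ℕ) := by
            rw [List.length_cons]
            push_cast
            ring
    · intro b a
      rw [List.prod_cons, Matrix.mul_apply, List.length_cons]
      have hsum : (∑ c, A b c * (Ms.prod) c a).coeff (Ms.length + 1)
          = ∑ c, (A b c * (Ms.prod) c a).coeff (Ms.length + 1) := by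
        rw [Polynomial.finset_sum_coeff]
      rw [hsum]
      have hterm : ∀ c, (A b c * (Ms.prod) c a).coeff (Ms.length + 1)
          = (A b c).coeff 1 * ((Ms.prod) c a).coeff Ms.length := by
        intro c
        exact coeff_mul_top (hA b c) (ih1 c a)
      rw [Finset.sum_congr rfl (fun c _ => hterm c)]
      rw [List.map_cons, List.prod_cons, Matrix.mul_apply]
      apply Finset.sum_congr rfl
      intro c _
      rw [Matrix.map_apply, ih2 c a]


/-- Top-degree coefficient matrix of `LM`. -/
noncomputable def topL (i : B) : Matrix W W ℚ :=
  Matrix.of fun b a => if cs.IsLeftDescent a i ∧ (b = cs.simple i * a ∨ b = a) then 1 else 0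

/-- Top-degree coefficient matrix of `RM`. -/
noncomputable def topR (i : B) : Matrix W W ℚ :=
  Matrix.of fun b a => if cs.IsRightDescent a i ∧ (b = a * cs.simple i ∨ b = a) then 1 else 0

theorem simple_mul_ne_of_leftDescent {a : W} {i : B} (h : cs.IsLeftDescent a i) :
    cs.simple i * a ≠ a := by
  intro hcon
  have : ℓ (s i * a) < ℓ a := h
  rw [hcon] at this
  omega

theorem mul_simple_ne_of_rightDescent {a : W} {i : B} (h : cs.IsRightDescent a i) :
    a * cs.simple i ≠ a := by
  intro hcon
  have : ℓ (a * s i) < ℓ a := h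
  rw [hcon] at this
  omega

theorem LM_top (i : B) : (LM cs i).map (fun p => p.coeff 1) = topL cs i := by
  ext b a
  rw [Matrix.map_apply]
  unfold LM topL
  simp only [Matrix.of_apply]
  by_cases hd : cs.IsLeftDescent a i
  · rw [if_pos hd]
    by_cases h1 : b = cs.simple i * a
    · rw [if_pos h1, if_pos ⟨hd, Or.inl h1⟩, coeff_X_one]
    · rw [if_neg h1]
      by_cases h2 : b = a
      · rw [if_pos h2, if_pos ⟨hd, Or.inr h2⟩]
        simp [coeff_one]
      · rw [if_neg h2, if_neg (fun hcon => hcon.2.elim (fun h => h1 h) (fun h => h2 h))]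
        simp
  · rw [if_neg (fun hcon : cs.IsLeftDescent a i ∧ (b = cs.simple i * a ∨ b = a) => hd hcon.1),
      if_neg hd]
    split_ifs <;> simp [coeff_one]

theorem RM_top (i : B) : (RM cs i).map (fun p => p.coeff 1) = topR cs i := by
  ext b a
  rw [Matrix.map_apply]
  unfold RM topR
  simp only [Matrix.of_apply]
  by_cases hd : cs.IsRightDescent a i
  · rw [if_pos hd]
    by_cases h1 : b = a * cs.simple i
    · rw [if_pos h1, if_pos ⟨hd, Or.inl h1⟩, coeff_X_one]
    · rw [if_neg h1]
      by_cases h2 : b = a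
      · rw [if_pos h2, if_pos ⟨hd, Or.inr h2⟩]
        simp [coeff_one]
      · rw [if_neg h2, if_neg (fun hcon => hcon.2.elim (fun h => h1 h) (fun h => h2 h))]
        simp
  · rw [if_neg (fun hcon : cs.IsRightDescent a i ∧ (b = a * cs.simple i ∨ b = a) => hd hcon.1),
      if_neg hd]
    split_ifs <;> simp [coeff_one]

/-- Predicate: nonnegative entries, and nonzero entries only weakly decrease length. -/
def Pred' (A : Matrix W W ℚ) : Prop :=
  (∀ b a, 0 ≤ A b a) ∧ (∀ b a, A b a ≠ 0 → b = a ∨ ℓ b < ℓ a)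

theorem topL_pred (i : B) : Pred' cs (topL cs i) := by
  constructor
  · intro b a
    unfold topL
    simp only [Matrix.of_apply]
    split_ifs <;> norm_num
  · intro b a h
    unfold topL at h
    simp only [Matrix.of_apply] at h
    by_cases hcond : cs.IsLeftDescent a i ∧ (b = cs.simple i * a ∨ b = a)
    · obtain ⟨hd, hor⟩ := hcond
      rcases hor with h1 | h1
      · exact Or.inr (by rw [h1]; exact hd)
      · exact Or.inl h1
    · rw [if_neg hcond] at h
      exact absurd rfl h

theorem topR_pred (i : B) : Pred' cs (topR cs i) := by
  constructor
  · intro b a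
    unfold topR
    simp only [Matrix.of_apply]
    split_ifs <;> norm_num
  · intro b a h
    unfold topR at h
    simp only [Matrix.of_apply] at h
    by_cases hcond : cs.IsRightDescent a i ∧ (b = a * cs.simple i ∨ b = a)
    · obtain ⟨hd, hor⟩ := hcond
      rcases hor with h1 | h1
      · exact Or.inr (by rw [h1]; exact hd)
      · exact Or.inl h1
    · rw [if_neg hcond] at h
      exact absurd rfl h

theorem prod_pred_diag : ∀ (Ms : List (Matrix W W ℚ)), (∀ A ∈ Ms, Pred' cs A) →
    Pred' cs (Ms.prod) ∧ ∀ a, (Ms.prod) a a = (Ms.map (fun (A : Matrix W W ℚ) => A a a)).prod := by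
  intro Ms
  induction Ms with
  | nil =>
    intro _
    refine ⟨⟨?_, ?_⟩, ?_⟩
    · intro b a
      rw [List.prod_nil, Matrix.one_apply]
      split_ifs <;> norm_num
    · intro b a h
      rw [List.prod_nil] at h
      by_cases hba : b = a
      · exact Or.inl hba
      · rw [Matrix.one_apply_ne hba] at h
        exact absurd rfl h
    · intro a
      simp
  | cons A Ms ih =>
    intro hP
    have hA : Pred' cs A := hP A List.mem_cons_self
    obtain ⟨⟨ihnn, ihlen⟩, ihdiag⟩ := ih (fun A' h => hP A' (List.mem_cons_of_mem A h))
    have hnn : ∀ b a, 0 ≤ ((A :: Ms).prod) b a := by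
      intro b a
      rw [List.prod_cons, Matrix.mul_apply]
      exact Finset.sum_nonneg fun c _ => mul_nonneg (hA.1 b c) (ihnn c a)
    have hlen : ∀ b a, ((A :: Ms).prod) b a ≠ 0 → b = a ∨ ℓ b < ℓ a := by
      intro b a h
      rw [List.prod_cons, Matrix.mul_apply] at h
      obtain ⟨c, _, hc⟩ := Finset.exists_ne_zero_of_sum_ne_zero h
      have h1 : A b c ≠ 0 := fun h' => hc (by rw [h', zero_mul])
      have h2 : (Ms.prod) c a ≠ 0 := fun h' => hc (by rw [h', mul_zero])
      rcases hA.2 b c h1 with rfl | hbc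
      · exact ihlen b a h2
      · rcases ihlen c a h2 with rfl | hca
        · exact Or.inr hbc
        · exact Or.inr (lt_trans hbc hca)
    refine ⟨⟨hnn, hlen⟩, ?_⟩
    intro a
    rw [List.prod_cons, Matrix.mul_apply, List.map_cons, List.prod_cons, ← ihdiag a]
    apply Finset.sum_eq_single a
    · intro c _ hne
      by_cases h1 : A a c = 0
      · rw [h1, zero_mul]
      · by_cases h2 : (Ms.prod) c a = 0
        · rw [h2, mul_zero]
        · exfalso
          rcases hA.2 a c h1 with rfl | hac
          · exact hne rfl
          · rcases ihlen c a h2 with rfl | hca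
            · exact hne rfl
            · omega
    · intro h
      exact absurd (Finset.mem_univ a) h

theorem topL_diag (i : B) (a : W) :
    (topL cs i) a a = if cs.IsLeftDescent a i then 1 else 0 := by
  by_cases hd : cs.IsLeftDescent a i <;> simp [topL, hd]

theorem topR_diag (i : B) (a : W) :
    (topR cs i) a a = if cs.IsRightDescent a i then 1 else 0 := by
  by_cases hd : cs.IsRightDescent a i <;> simp [topR, hd]

theorem prod_ite_one (p : B → Prop) [DecidablePred p] : ∀ (l : List B),
    (l.map (fun i => if p i then (1 : ℚ) else 0)).prod = if (∀ i ∈ l, p i) then 1 else 0 := by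
  intro l
  induction l with
  | nil => simp
  | cons i l ih =>
    rw [List.map_cons, List.prod_cons, ih]
    by_cases hi : p i
    · by_cases hl : ∀ j ∈ l, p j
      · have hall : ∀ j ∈ i :: l, p j := by
          intro j hj
          rcases List.mem_cons.mp hj with rfl | h
          · exact hi
          · exact hl j h
        rw [if_pos hi, if_pos hl, if_pos hall, one_mul]
      · rw [if_pos hi, if_neg hl,
          if_neg (fun h => hl (fun j hj => h j (List.mem_cons_of_mem i hj))), mul_zero]
    · rw [if_neg hi, zero_mul, if_neg (fun h => hi (h i List.mem_cons_self))]



theorem top_trace_count (l m : List B) :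
    Matrix.trace ((l.map (topL cs) ++ m.map (topR cs)).prod)
      = ((Finset.univ.filter (fun a => (∀ i ∈ l, cs.IsLeftDescent a i)
          ∧ (∀ i ∈ m, cs.IsRightDescent a i))).card : ℚ) := by
  have hPred : ∀ A ∈ (l.map (topL cs) ++ m.map (topR cs)), Pred' cs A := by
    intro A hA
    rcases List.mem_append.mp hA with h | h
    · obtain ⟨i, _, rfl⟩ := List.mem_map.mp h
      exact topL_pred cs i
    · obtain ⟨i, _, rfl⟩ := List.mem_map.mp h
      exact topR_pred cs i
  obtain ⟨_, hdiag⟩ := prod_pred_diag cs _ hPred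
  have htr : Matrix.trace ((l.map (topL cs) ++ m.map (topR cs)).prod)
      = ∑ a : W, ((l.map (topL cs) ++ m.map (topR cs)).prod) a a := rfl
  rw [htr]
  have hterm : ∀ a : W, ((l.map (topL cs) ++ m.map (topR cs)).prod) a a
      = if ((∀ i ∈ l, cs.IsLeftDescent a i) ∧ (∀ i ∈ m, cs.IsRightDescent a i)) then 1 else 0 := by
    intro a
    rw [hdiag a, List.map_append, List.map_map, List.map_map]
    have hmapL : List.map ((fun (A : Matrix W W ℚ) => A a a) ∘ topL cs) l
        = List.map (fun i => if cs.IsLeftDescent a i then (1:ℚ) else 0) l := by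
      apply List.map_congr_left
      intro i _
      exact topL_diag cs i a
    have hmapR : List.map ((fun (A : Matrix W W ℚ) => A a a) ∘ topR cs) m
        = List.map (fun i => if cs.IsRightDescent a i then (1:ℚ) else 0) m := by
      apply List.map_congr_left
      intro i _
      exact topR_diag cs i a
    rw [hmapL, hmapR, List.prod_append, prod_ite_one, prod_ite_one]
    by_cases h1 : ∀ i ∈ l, cs.IsLeftDescent a i <;> by_cases h2 : ∀ i ∈ m, cs.IsRightDescent a i
    · rw [if_pos h1, if_pos h2, if_pos ⟨h1, h2⟩, one_mul]
    · rw [if_pos h1, if_neg h2, mul_zero, if_neg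
        (fun hc : (∀ i ∈ l, cs.IsLeftDescent a i) ∧ (∀ i ∈ m, cs.IsRightDescent a i) => h2 hc.2)]
    · rw [if_neg h1, zero_mul, if_neg
        (fun hc : (∀ i ∈ l, cs.IsLeftDescent a i) ∧ (∀ i ∈ m, cs.IsRightDescent a i) => h1 hc.1)]
    · rw [if_neg h1, zero_mul, if_neg
        (fun hc : (∀ i ∈ l, cs.IsLeftDescent a i) ∧ (∀ i ∈ m, cs.IsRightDescent a i) => h1 hc.1)]
  rw [Finset.sum_congr rfl (fun a _ => hterm a)]
  rw [Finset.sum_boole]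

section HeckeAlgebra

variable {H : Type} [Ring H] [Algebra (RatFunc ℚ) H] (T : Module.Basis W (RatFunc ℚ) H)

theorem Tsq (hquad : ∀ i : B, (T (cs.simple i) + 1) *
      (T (cs.simple i) - algebraMap (RatFunc ℚ) H RatFunc.X) = 0) (i : B) :
    T (cs.simple i) * T (cs.simple i)
      = (RatFunc.X : RatFunc ℚ) • T (cs.simple i) - T (cs.simple i)
          + algebraMap (RatFunc ℚ) H RatFunc.X := by
  have h := hquad i
  have hcomm : T (s i) * algebraMap (RatFunc ℚ) H RatFunc.X
      = algebraMap (RatFunc ℚ) H RatFunc.X * T (s i) := (Algebra.commutes _ _).symm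
  have expand : (T (s i) + 1) * (T (s i) - algebraMap (RatFunc ℚ) H RatFunc.X)
      = T (s i) * T (s i) - algebraMap (RatFunc ℚ) H RatFunc.X * T (s i) + T (s i)
        - algebraMap (RatFunc ℚ) H RatFunc.X := by
    rw [add_mul, one_mul, mul_sub, hcomm]
    abel
  rw [expand] at h
  rw [← sub_eq_zero, Algebra.smul_def]
  calc T (s i) * T (s i) - (algebraMap (RatFunc ℚ) H RatFunc.X * T (s i) - T (s i)
        + algebraMap (RatFunc ℚ) H RatFunc.X)
      = T (s i) * T (s i) - algebraMap (RatFunc ℚ) H RatFunc.X * T (s i) + T (s i)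
        - algebraMap (RatFunc ℚ) H RatFunc.X := by abel
    _ = 0 := h

theorem mulLeft_simple_matrix
    (hmul : ∀ w w' : W, cs.length (w * w') = cs.length w + cs.length w' →
      T w * T w' = T (w * w'))
    (hquad : ∀ i : B, (T (cs.simple i) + 1) *
      (T (cs.simple i) - algebraMap (RatFunc ℚ) H RatFunc.X) = 0) (i : B) :
    LinearMap.toMatrix T T (LinearMap.mulLeft (RatFunc ℚ) (T (cs.simple i)))
      = (LM cs i).map (algebraMap (Polynomial ℚ) (RatFunc ℚ)) := by
  ext a b
  rw [LinearMap.toMatrix_apply, LinearMap.mulLeft_apply, Matrix.map_apply]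
  by_cases hd : cs.IsLeftDescent b i
  · have hlb : ℓ (s i * b) + 1 = ℓ b := (cs.isLeftDescent_iff).mp hd
    have hlen : ℓ (s i * (s i * b)) = ℓ (s i) + ℓ (s i * b) := by
      rw [cs.simple_mul_simple_cancel_left, cs.length_simple]
      omega
    have h1 : T (s i) * T (s i * b) = T b := by
      have := hmul (s i) (s i * b) hlen
      rwa [cs.simple_mul_simple_cancel_left] at this
    have h2 : T (s i) * T b = (RatFunc.X : RatFunc ℚ) • T (s i * b) + ((RatFunc.X : RatFunc ℚ) - 1) • T b := by
      rw [← h1, ← mul_assoc, Tsq cs T hquad i]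
      rw [add_mul, sub_mul, smul_mul_assoc, h1, ← Algebra.smul_def, sub_smul, one_smul]
      abel
    rw [h2, map_add, map_smul, map_smul]
    have hne : s i * b ≠ b := by
      intro hcon
      have : ℓ (s i * b) < ℓ b := hd
      rw [hcon] at this
      omega
    unfold LM
    simp only [Matrix.of_apply, if_pos hd]
    rw [Finsupp.add_apply, Finsupp.smul_apply, Finsupp.smul_apply, T.repr_self, T.repr_self]
    by_cases ha1 : a = s i * b
    · rw [if_pos ha1, Finsupp.single_apply, if_pos ha1.symm, Finsupp.single_apply,
        if_neg (show ¬ (b = a) from fun h => hne (h.trans ha1).symm), RatFunc.algebraMap_X]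
      simp
    · rw [if_neg ha1, Finsupp.single_apply, if_neg (fun h => ha1 h.symm)]
      by_cases ha2 : a = b
      · rw [if_pos ha2, Finsupp.single_apply, if_pos ha2.symm]
        simp [RatFunc.algebraMap_X]
      · rw [if_neg ha2, Finsupp.single_apply, if_neg (fun h => ha2 h.symm)]
        simp
  · have hlb : ℓ (s i * b) = ℓ b + 1 := (cs.not_isLeftDescent_iff).mp hd
    have hlen : ℓ (s i * b) = ℓ (s i) + ℓ b := by
      rw [cs.length_simple]
      omega
    have h1 : T (s i) * T b = T (s i * b) := hmul (s i) b hlen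
    rw [h1]
    unfold LM
    simp only [Matrix.of_apply, if_neg hd]
    rw [T.repr_self, Finsupp.single_apply]
    by_cases ha1 : a = s i * b
    · rw [if_pos ha1.symm, if_pos ha1]
      simp
    · rw [if_neg (fun h => ha1 h.symm), if_neg ha1]
      simp

theorem mulRight_simple_matrix
    (hmul : ∀ w w' : W, cs.length (w * w') = cs.length w + cs.length w' →
      T w * T w' = T (w * w'))
    (hquad : ∀ i : B, (T (cs.simple i) + 1) *
      (T (cs.simple i) - algebraMap (RatFunc ℚ) H RatFunc.X) = 0) (i : B) :
    LinearMap.toMatrix T T (LinearMap.mulRight (RatFunc ℚ) (T (cs.simple i)))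
      = (RM cs i).map (algebraMap (Polynomial ℚ) (RatFunc ℚ)) := by
  ext a b
  rw [LinearMap.toMatrix_apply, LinearMap.mulRight_apply, Matrix.map_apply]
  by_cases hd : cs.IsRightDescent b i
  · have hlb : ℓ (b * s i) + 1 = ℓ b := (cs.isRightDescent_iff).mp hd
    have hlen : ℓ ((b * s i) * s i) = ℓ (b * s i) + ℓ (s i) := by
      rw [cs.simple_mul_simple_cancel_right, cs.length_simple]
      omega
    have h1 : T (b * s i) * T (s i) = T b := by
      have := hmul (b * s i) (s i) hlen
      rwa [cs.simple_mul_simple_cancel_right] at this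
    have h2 : T b * T (s i) = (RatFunc.X : RatFunc ℚ) • T (b * s i) + ((RatFunc.X : RatFunc ℚ) - 1) • T b := by
      rw [← h1, mul_assoc, Tsq cs T hquad i]
      rw [mul_add, mul_sub, mul_smul_comm, h1, ← Algebra.commutes, ← Algebra.smul_def, sub_smul,
        one_smul]
      abel
    rw [h2, map_add, map_smul, map_smul]
    have hne : b * s i ≠ b := by
      intro hcon
      have : ℓ (b * s i) < ℓ b := hd
      rw [hcon] at this
      omega
    unfold RM
    simp only [Matrix.of_apply, if_pos hd]
    rw [Finsupp.add_apply, Finsupp.smul_apply, Finsupp.smul_apply, T.repr_self, T.repr_self]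
    by_cases ha1 : a = b * s i
    · rw [if_pos ha1, Finsupp.single_apply, if_pos ha1.symm, Finsupp.single_apply,
        if_neg (show ¬ (b = a) from fun h => hne (h.trans ha1).symm), RatFunc.algebraMap_X]
      simp
    · rw [if_neg ha1, Finsupp.single_apply, if_neg (fun h => ha1 h.symm)]
      by_cases ha2 : a = b
      · rw [if_pos ha2, Finsupp.single_apply, if_pos ha2.symm]
        simp [RatFunc.algebraMap_X]
      · rw [if_neg ha2, Finsupp.single_apply, if_neg (fun h => ha2 h.symm)]
        simp
  · have hlb : ℓ (b * s i) = ℓ b + 1 := (cs.not_isRightDescent_iff).mp hd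
    have hlen : ℓ (b * s i) = ℓ b + ℓ (s i) := by
      rw [cs.length_simple]
      omega
    have h1 : T b * T (s i) = T (b * s i) := hmul b (s i) hlen
    rw [h1]
    unfold RM
    simp only [Matrix.of_apply, if_neg hd]
    rw [T.repr_self, Finsupp.single_apply]
    by_cases ha1 : a = b * s i
    · rw [if_pos ha1.symm, if_pos ha1]
      simp
    · rw [if_neg (fun h => ha1 h.symm), if_neg ha1]
      simp


theorem mulLeft_word_matrix
    (hone : T 1 = 1)
    (hmul : ∀ w w' : W, cs.length (w * w') = cs.length w + cs.length w' →
      T w * T w' = T (w * w'))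
    (hquad : ∀ i : B, (T (cs.simple i) + 1) *
      (T (cs.simple i) - algebraMap (RatFunc ℚ) H RatFunc.X) = 0) :
    ∀ (l : List B), cs.IsReduced l →
    LinearMap.toMatrix T T (LinearMap.mulLeft (RatFunc ℚ) (T (π l)))
      = ((l.map (LM cs)).prod).map (algebraMap (Polynomial ℚ) (RatFunc ℚ)) := by
  intro l
  induction l with
  | nil =>
    intro _
    rw [cs.wordProd_nil, hone, LinearMap.mulLeft_one, List.map_nil, List.prod_nil]
    rw [LinearMap.toMatrix_id]
    ext a b
    rw [Matrix.map_apply, Matrix.one_apply, Matrix.one_apply]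
    split_ifs <;> simp
  | cons i l ih =>
    intro hred
    have hlred : cs.IsReduced l := CoxeterSystem.IsReduced.drop (ω := i :: l) hred 1
    have hlen : ℓ (s i * π l) = ℓ (s i) + ℓ (π l) := by
      have h1 : ℓ (π (i :: l)) = l.length + 1 := by
        rw [hred]
        simp
      rw [cs.wordProd_cons] at h1
      rw [h1, cs.length_simple, hlred]
      omega
    have hsplit : T (π (i :: l)) = T (s i) * T (π l) := by
      rw [cs.wordProd_cons, ← hmul (s i) (π l) hlen]
    rw [hsplit, LinearMap.mulLeft_mul, LinearMap.toMatrix_comp T T T,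
      mulLeft_simple_matrix cs T hmul hquad i, ih hlred, List.map_cons, List.prod_cons,
      Matrix.map_mul]

theorem mulRight_word_matrix
    (hone : T 1 = 1)
    (hmul : ∀ w w' : W, cs.length (w * w') = cs.length w + cs.length w' →
      T w * T w' = T (w * w'))
    (hquad : ∀ i : B, (T (cs.simple i) + 1) *
      (T (cs.simple i) - algebraMap (RatFunc ℚ) H RatFunc.X) = 0) :
    ∀ (m : List B), cs.IsReduced m →
    LinearMap.toMatrix T T (LinearMap.mulRight (RatFunc ℚ) (T (π m)))
      = (((m.map (RM cs)).reverse).prod).map (algebraMap (Polynomial ℚ) (RatFunc ℚ)) := by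
  intro m
  induction m with
  | nil =>
    intro _
    rw [cs.wordProd_nil, hone, LinearMap.mulRight_one, List.map_nil, List.reverse_nil,
      List.prod_nil]
    rw [LinearMap.toMatrix_id]
    ext a b
    rw [Matrix.map_apply, Matrix.one_apply, Matrix.one_apply]
    split_ifs <;> simp
  | cons i m ih =>
    intro hred
    have hmred : cs.IsReduced m := CoxeterSystem.IsReduced.drop (ω := i :: m) hred 1
    have hlen : ℓ (s i * π m) = ℓ (s i) + ℓ (π m) := by
      have h1 : ℓ (π (i :: m)) = m.length + 1 := by
        rw [hred]
        simp
      rw [cs.wordProd_cons] at h1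
      rw [h1, cs.length_simple, hmred]
      omega
    have hsplit : T (π (i :: m)) = T (s i) * T (π m) := by
      rw [cs.wordProd_cons, ← hmul (s i) (π m) hlen]
    rw [hsplit, LinearMap.mulRight_mul, LinearMap.toMatrix_comp T T T,
      mulRight_simple_matrix cs T hmul hquad i, ih hmred, List.map_cons, List.reverse_cons,
      List.prod_append, List.prod_singleton, Matrix.map_mul]


end HeckeAlgebra



end Part2

end HeckeAux

open HeckeAux

/-- let `N = N^{w,w'} ∈ ℤ[q]` be the trace of `h ↦ T_w h T_{w'⁻¹}` on the
Iwahori–Hecke algebra over `ℚ(q)`, and `n = ℓ(w) + ℓ(w')`.  Then the coefficient of `q^i`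
in `N` vanishes for `i > n`, and the coefficient of `q^n` equals the number of `a' ∈ W`
with `supp(w) ⊆ L_{a'}` and `supp(w') ⊆ R_{a'}`; in particular it is positive. -/
theorem hecke_trace_leading_coeff
    {B W : Type} [Group W] [Fintype W] {M : CoxeterMatrix B} (cs : CoxeterSystem M W)
    (H : Type) [Ring H] [Algebra (RatFunc ℚ) H]
    (T : Module.Basis W (RatFunc ℚ) H)
    (hone : T 1 = 1)
    (hmul : ∀ w w' : W, cs.length (w * w') = cs.length w + cs.length w' →
      T w * T w' = T (w * w'))
    (hquad : ∀ i : B, (T (cs.simple i) + 1) *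
      (T (cs.simple i) - algebraMap (RatFunc ℚ) H RatFunc.X) = 0)
    (w w' : W) (n : ℕ) (hn : n = cs.length w + cs.length w')
    (N : Polynomial ℚ)
    (hN : algebraMap (Polynomial ℚ) (RatFunc ℚ) N =
      LinearMap.trace (RatFunc ℚ) H
        ((LinearMap.mulLeft (RatFunc ℚ) (T w)).comp
          (LinearMap.mulRight (RatFunc ℚ) (T w'⁻¹)))) :
    (∀ i : ℕ, n < i → N.coeff i = 0) ∧
    N.coeff n = ({a' : W | (∀ i ∈ cs.support w, cs.IsLeftDescent a' i) ∧
      (∀ i ∈ cs.support w', cs.IsRightDescent a' i)}).ncard ∧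
    0 < N.coeff n := by
  classical
  obtain ⟨l, hlred, hlw⟩ := cs.exists_reduced_word' w
  obtain ⟨m, hmred, hmw⟩ := cs.exists_reduced_word' (w'⁻¹)
  set θ := algebraMap (Polynomial ℚ) (RatFunc ℚ) with hθ
  set Ms : List (Matrix W W (Polynomial ℚ)) := l.map (LM cs) ++ (m.map (RM cs)).reverse with hMs
  -- the matrix of the linear map
  have hmat : LinearMap.toMatrix T T ((LinearMap.mulLeft (RatFunc ℚ) (T w)).comp
        (LinearMap.mulRight (RatFunc ℚ) (T w'⁻¹))) = (Ms.prod).map θ := by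
    rw [LinearMap.toMatrix_comp T T T, hlw, hmw,
      mulLeft_word_matrix cs T hone hmul hquad l hlred,
      mulRight_word_matrix cs T hone hmul hquad m hmred, ← Matrix.map_mul, hMs,
      List.prod_append]
  have htrmap : Matrix.trace ((Ms.prod).map θ) = θ (Matrix.trace (Ms.prod)) := by
    rw [Matrix.trace, Matrix.trace, map_sum]
    apply Finset.sum_congr rfl
    intro a _
    rw [Matrix.diag_apply, Matrix.diag_apply, Matrix.map_apply]
  have htrace : LinearMap.trace (RatFunc ℚ) H ((LinearMap.mulLeft (RatFunc ℚ) (T w)).comp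
        (LinearMap.mulRight (RatFunc ℚ) (T w'⁻¹))) = θ (Matrix.trace (Ms.prod)) := by
    rw [LinearMap.trace_eq_matrix_trace (RatFunc ℚ) T, hmat, htrmap]
  have hNP : N = Matrix.trace (Ms.prod) :=
    RatFunc.algebraMap_injective ℚ (hN.trans htrace)
  -- lengths
  have hll : l.length = cs.length w := by
    rw [hlw]
    exact hlred.symm
  have hml : m.length = cs.length w' := by
    have := hmred
    unfold CoxeterSystem.IsReduced at this
    rw [← hmw, cs.length_inv] at this
    omega
  have hMslen : Ms.length = n := by
    rw [hMs, List.length_append, List.length_map, List.length_reverse, List.length_map,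
      hll, hml, hn]
  have hdeg : ∀ A ∈ Ms, ∀ b a, (A b a).degree ≤ 1 := by
    intro A hA
    rcases List.mem_append.mp hA with h | h
    · obtain ⟨i, _, rfl⟩ := List.mem_map.mp h
      exact LM_degree_le cs i
    · rw [List.mem_reverse] at h
      obtain ⟨i, _, rfl⟩ := List.mem_map.mp h
      exact RM_degree_le cs i
  obtain ⟨hD, hC⟩ := prod_degree_coeff Ms hdeg
  have htrcoeff : ∀ j : ℕ, (Matrix.trace (Ms.prod)).coeff j = ∑ a : W, ((Ms.prod) a a).coeff j := by
    intro j
    rw [Matrix.trace]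
    rw [Polynomial.finset_sum_coeff]
    rfl
  have hvanish : ∀ i : ℕ, n < i → N.coeff i = 0 := by
    intro i hi
    rw [hNP, htrcoeff]
    apply Finset.sum_eq_zero
    intro a _
    apply Polynomial.coeff_eq_zero_of_degree_lt
    apply lt_of_le_of_lt (hD a a)
    rw [hMslen]
    exact_mod_cast hi
  -- top coefficient
  have hmaptop : Ms.map (fun (A : Matrix W W (Polynomial ℚ)) => A.map (fun p => p.coeff 1))
      = l.map (topL cs) ++ (m.reverse).map (topR cs) := by
    rw [hMs, List.map_append, List.map_map, List.map_reverse, List.map_map, ← List.map_reverse]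
    congr 1
    · apply List.map_congr_left
      intro i _
      exact LM_top cs i
    · rw [List.map_reverse, List.map_reverse]
      congr 1
      apply List.map_congr_left
      intro i _
      exact RM_top cs i
  have hrevred : cs.IsReduced m.reverse := (cs.isReduced_reverse_iff m).mpr hmred
  have hrevprod : cs.wordProd m.reverse = w' := by
    rw [cs.wordProd_reverse, ← hmw, inv_inv]
  have hseteq : {a' : W | (∀ i ∈ cs.support w, cs.IsLeftDescent a' i) ∧
      (∀ i ∈ cs.support w', cs.IsRightDescent a' i)}
      = ↑(Finset.univ.filter (fun a => (∀ i ∈ l, cs.IsLeftDescent a i)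
          ∧ (∀ i ∈ m.reverse, cs.IsRightDescent a i))) := by
    ext a
    simp only [Set.mem_setOf_eq, Finset.coe_filter, Finset.mem_univ, true_and]
    constructor
    · rintro ⟨h1, h2⟩
      constructor
      · have := (left_descent_iff_support cs l hlred a).mp
        apply this
        rw [hlw] at h1
        exact h1
      · have := (right_descent_iff_support cs m.reverse hrevred a).mp
        apply this
        rw [hrevprod]
        exact h2
    · rintro ⟨h1, h2⟩
      constructor
      · have := (left_descent_iff_support cs l hlred a).mpr h1
        rw [hlw]
        exact this
      · have := (right_descent_iff_support cs m.reverse hrevred a).mpr h2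
        rw [← hrevprod]
        exact this
  have hcard : ({a' : W | (∀ i ∈ cs.support w, cs.IsLeftDescent a' i) ∧
      (∀ i ∈ cs.support w', cs.IsRightDescent a' i)}).ncard
      = (Finset.univ.filter (fun a => (∀ i ∈ l, cs.IsLeftDescent a i)
          ∧ (∀ i ∈ m.reverse, cs.IsRightDescent a i))).card := by
    rw [hseteq, Set.ncard_coe_finset]
  have hcoeffn : N.coeff n = ((Finset.univ.filter (fun a => (∀ i ∈ l, cs.IsLeftDescent a i)
      ∧ (∀ i ∈ m.reverse, cs.IsRightDescent a i))).card : ℚ) := by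
    rw [hNP, htrcoeff, ← hMslen]
    have hstep : ∀ a : W, ((Ms.prod) a a).coeff Ms.length
        = ((l.map (topL cs) ++ (m.reverse).map (topR cs)).prod) a a := by
      intro a
      rw [hC a a, hmaptop]
    rw [Finset.sum_congr rfl (fun a _ => hstep a)]
    rw [← top_trace_count cs l m.reverse]
    rfl
  -- positivity
  obtain ⟨a₀, _, ha₀⟩ := Finset.exists_max_image Finset.univ (cs.length)
    ⟨(1 : W), Finset.mem_univ 1⟩
  have ha₀mem : a₀ ∈ Finset.univ.filter (fun a => (∀ i ∈ l, cs.IsLeftDescent a i)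
      ∧ (∀ i ∈ m.reverse, cs.IsRightDescent a i)) := by
    rw [Finset.mem_filter]
    refine ⟨Finset.mem_univ a₀, ?_, ?_⟩
    · intro i _
      have h1 : cs.length (cs.simple i * a₀) ≤ cs.length a₀ :=
        ha₀ _ (Finset.mem_univ _)
      have h2 : cs.length (cs.simple i * a₀) ≠ cs.length a₀ :=
        cs.length_simple_mul_ne a₀ i
      exact lt_of_le_of_ne h1 h2
    · intro i _
      have h1 : cs.length (a₀ * cs.simple i) ≤ cs.length a₀ :=
        ha₀ _ (Finset.mem_univ _)
      have h2 : cs.length (a₀ * cs.simple i) ≠ cs.length a₀ :=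
        cs.length_mul_simple_ne a₀ i
      exact lt_of_le_of_ne h1 h2
  have hcardpos : 0 < (Finset.univ.filter (fun a => (∀ i ∈ l, cs.IsLeftDescent a i)
      ∧ (∀ i ∈ m.reverse, cs.IsRightDescent a i))).card :=
    Finset.card_pos.mpr ⟨a₀, ha₀mem⟩
  refine ⟨hvanish, ?_, ?_⟩
  · rw [hcoeffn, hcard]
  · rw [hcoeffn]
    exact_mod_cast hcardpos
end
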